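/- arXiv:1704.07309 — 8 statements merged into one kernel-verified Lean document; each statement's English description precedes it below -/
import Mathlib

section
/- Leakage chain rule for quantum min-entropy of separable states: Let N, K, M ≥ 1, let ι be a finite index type, let p : ι → ℝ be nonnegative with Σ_k p_k = 1, and for each k ∈ ι let ρ_XZ^k be a density matrix on ℂ^{N·K} (with rows and columns indexed by Fin N × Fin K) and ρ_B^k a density matrix on ℂ^M. Let ρ = Σ_k p_k • (ρ_XZ^k ⊗ ρ_B^k), a density matrix indexed by (Fin N × Fin K) × Fin M. Suppose there exist c ≥ 0 and a density matrix σ_Z on ℂ^K such that Σ_k p_k • ρ_XZ^k ≤ c • ((N:ℝ)⁻¹ • (I_N ⊗ σ_Z)) in the Loewner order. Then there exists a density matrix σ_ZB on ℂ^{K·M} (indexed by Fin K × Fin M) such that ρ ≤ (c·M) • ((N:ℝ)⁻¹ • (I_N ⊗ σ_ZB)), where I_N ⊗ σ_ZB is reindexed via the natural identification of Fin N × (Fin K × Fin M) with (Fin N × Fin K) × Fin M. (In entropy terms: if the B-system has ℓ = log₂ M qubits, then H_min(X|ZB)_ρ ≥ H_min(X|Z)_ρ − ℓ.) -/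
open Matrix
open scoped ComplexOrder Kronecker

variable {m n : Type*} [Fintype m] [Fintype n] [DecidableEq m] [DecidableEq n]

lemma kron_conjTranspose (A : Matrix m m ℂ) (B : Matrix n n ℂ) :
    (A ⊗ₖ B)ᴴ = Aᴴ ⊗ₖ Bᴴ := by
  ext ⟨i, j⟩ ⟨k, l⟩
  simp [conjTranspose_apply, mul_comm]

lemma posSemidef_kron {A : Matrix m m ℂ} {B : Matrix n n ℂ}
    (hA : A.PosSemidef) (hB : B.PosSemidef) : (A ⊗ₖ B).PosSemidef := by
  exact hA.kronecker hB

lemma posSemidef_real_smul {r : ℝ} (hr : 0 ≤ r) {A : Matrix m m ℂ}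
    (hA : A.PosSemidef) : (r • A).PosSemidef := by
  refine posSemidef_iff_dotProduct_mulVec.mpr ⟨?_, fun x => ?_⟩
  · unfold Matrix.IsHermitian
    rw [conjTranspose_smul, star_trivial, hA.1]
  · rw [smul_mulVec, dotProduct_smul]
    have := hA.dotProduct_mulVec_nonneg x
    rw [RCLike.real_smul_eq_coe_mul]
    exact mul_nonneg (RCLike.ofReal_nonneg.mpr hr) this

lemma posSemidef_sum {ι : Type} [Fintype ι] {f : ι → Matrix m m ℂ}
    (h : ∀ i, (f i).PosSemidef) : (∑ i, f i).PosSemidef :=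
  Finset.sum_induction f _ (fun _ _ ha hb => ha.add hb) .zero (fun i _ => h i)

lemma one_sub_posSemidef {ρ : Matrix m m ℂ} (h : ρ.PosSemidef) (ht : ρ.trace = 1) :
    ((1 : Matrix m m ℂ) - ρ).PosSemidef := by
  have hH := h.isHermitian
  set U : Matrix m m ℂ := (hH.eigenvectorUnitary : Matrix m m ℂ)
  have hU1 : U * star U = 1 := (Matrix.mem_unitaryGroup_iff).mp hH.eigenvectorUnitary.2
  have hU2 : star U * U = 1 := (Matrix.mem_unitaryGroup_iff').mp hH.eigenvectorUnitary.2
  have hspec : ρ = U * diagonal (RCLike.ofReal ∘ hH.eigenvalues) * star U := hH.spectral_theorem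
  have htr : ∑ i, hH.eigenvalues i = 1 := by
    have h2 : ρ.trace = ∑ i, (hH.eigenvalues i : ℂ) := by
      conv_lhs => rw [hspec]
      rw [Matrix.trace_mul_cycle, hU2, one_mul, trace_diagonal]
      simp
    rw [ht] at h2
    exact_mod_cast h2.symm
  have hle : ∀ i, hH.eigenvalues i ≤ 1 := by
    intro i
    rw [← htr]
    exact Finset.single_le_sum (fun j _ => h.eigenvalues_nonneg j) (Finset.mem_univ i)
  have hdec : (1 : Matrix m m ℂ) - ρ
      = U * diagonal (fun i => (1 : ℂ) - hH.eigenvalues i) * star U := by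
    have : (diagonal (fun i => (1 : ℂ) - hH.eigenvalues i))
        = 1 - diagonal (RCLike.ofReal ∘ hH.eigenvalues) := by
      rw [← diagonal_one, diagonal_sub]
      rfl
    rw [this, mul_sub, sub_mul, mul_one, hU1, ← hspec]
  have hdiag : (diagonal (fun i => (1 : ℂ) - hH.eigenvalues i)).PosSemidef := by
    refine PosSemidef.diagonal fun i => ?_
    have h1 : (0:ℝ) ≤ 1 - hH.eigenvalues i := by linarith [hle i]
    show (0:ℂ) ≤ 1 - (hH.eigenvalues i : ℂ)
    have h2 := (RCLike.ofReal_nonneg (K := ℂ)).mpr h1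
    push_cast at h2
    exact h2
  rw [hdec, star_eq_conjTranspose]
  exact hdiag.mul_mul_conjTranspose_same U

lemma sub_kron {l m n p : Type*} (A B : Matrix l m ℂ) (C : Matrix n p ℂ) :
    (A - B) ⊗ₖ C = A ⊗ₖ C - B ⊗ₖ C := by
  ext ⟨i, j⟩ ⟨k, l'⟩; simp [sub_mul]

lemma kron_sub {l m n p : Type*} (A : Matrix l m ℂ) (B C : Matrix n p ℂ) :
    A ⊗ₖ (B - C) = A ⊗ₖ B - A ⊗ₖ C := by
  ext ⟨i, j⟩ ⟨k, l'⟩; simp [mul_sub]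

lemma sum_kron {l m n p ι : Type*} [Fintype ι] (f : ι → Matrix l m ℂ) (C : Matrix n p ℂ) :
    (∑ i, f i) ⊗ₖ C = ∑ i, f i ⊗ₖ C := by
  ext ⟨i, j⟩ ⟨k, l'⟩; simp [Finset.sum_mul, Matrix.sum_apply]



/-- **Leakage chain rule for quantum min-entropy of separable states.**
Let `ρ = Σ_k p_k • (ρXZ^k ⊗ ρB^k)` be a separable state on `(X ⊗ Z) ⊗ B`, where the `B`
system has dimension `M`. If `Σ_k p_k • ρXZ^k ≤ c • ((1/N)·I_N ⊗ σ_Z)` for some density `σ_Z`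
(i.e. `H_min(X|Z)_ρ ≥ log N − log c`), then there is a density `σ_ZB` with
`ρ ≤ (c·M) • ((1/N)·I_N ⊗ σ_ZB)`, i.e. `H_min(X|ZB)_ρ ≥ H_min(X|Z)_ρ − log M`. -/
theorem leakage_chain_rule_separable (N K M : ℕ) (hN : 1 ≤ N) (hK : 1 ≤ K) (hM : 1 ≤ M)
    (ι : Type) [Fintype ι]
    (p : ι → ℝ) (hp : ∀ k, 0 ≤ p k) (hps : ∑ k, p k = 1)
    (ρXZ : ι → Matrix (Fin N × Fin K) (Fin N × Fin K) ℂ)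
    (hρXZ : ∀ k, (ρXZ k).PosSemidef ∧ (ρXZ k).trace = 1)
    (ρB : ι → Matrix (Fin M) (Fin M) ℂ)
    (hρB : ∀ k, (ρB k).PosSemidef ∧ (ρB k).trace = 1)
    (c : ℝ) (hc : 0 ≤ c)
    (σZ : Matrix (Fin K) (Fin K) ℂ) (hσZ : σZ.PosSemidef ∧ σZ.trace = 1)
    (hle : (c • ((N : ℝ)⁻¹ • ((1 : Matrix (Fin N) (Fin N) ℂ) ⊗ₖ σZ)) -
        ∑ k, p k • ρXZ k).PosSemidef) :
    ∃ σZB : Matrix (Fin K × Fin M) (Fin K × Fin M) ℂ,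
      σZB.PosSemidef ∧ σZB.trace = 1 ∧
      ((c * M) • ((N : ℝ)⁻¹ •
          (Matrix.reindex (Equiv.prodAssoc (Fin N) (Fin K) (Fin M)).symm
            (Equiv.prodAssoc (Fin N) (Fin K) (Fin M)).symm
            ((1 : Matrix (Fin N) (Fin N) ℂ) ⊗ₖ σZB))) -
        ∑ k, p k • (ρXZ k ⊗ₖ ρB k)).PosSemidef := by
  have hMne : (M : ℝ) ≠ 0 := Nat.cast_ne_zero.mpr (by omega)
  refine ⟨σZ ⊗ₖ ((M : ℝ)⁻¹ • 1), posSemidef_kron hσZ.1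
    (posSemidef_real_smul (by positivity) .one), ?_, ?_⟩
  · rw [trace_kronecker, hσZ.2, one_mul, trace_smul, trace_one]
    simp only [Fintype.card_fin]
    rw [Complex.real_smul]
    push_cast
    field_simp
  · have hre : (Matrix.reindex (Equiv.prodAssoc (Fin N) (Fin K) (Fin M)).symm
        (Equiv.prodAssoc (Fin N) (Fin K) (Fin M)).symm
        ((1 : Matrix (Fin N) (Fin N) ℂ) ⊗ₖ (σZ ⊗ₖ ((M : ℝ)⁻¹ • 1)))) =
        ((1 : Matrix (Fin N) (Fin N) ℂ) ⊗ₖ σZ) ⊗ₖ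
          ((M : ℝ)⁻¹ • (1 : Matrix (Fin M) (Fin M) ℂ)) := by
      ext ⟨⟨i, k⟩, m⟩ ⟨⟨j, l⟩, n⟩
      simp [Matrix.reindex_apply, Matrix.submatrix_apply, Equiv.prodAssoc, mul_assoc]
    rw [hre]
    have hs : (c * M) * ((N : ℝ)⁻¹ * (M : ℝ)⁻¹) = c * (N : ℝ)⁻¹ := by
      field_simp
    have key : (c * M) • ((N : ℝ)⁻¹ •
          (((1 : Matrix (Fin N) (Fin N) ℂ) ⊗ₖ σZ) ⊗ₖ
            ((M : ℝ)⁻¹ • (1 : Matrix (Fin M) (Fin M) ℂ)))) -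
          ∑ k, p k • (ρXZ k ⊗ₖ ρB k)
        = (c • ((N : ℝ)⁻¹ • ((1 : Matrix (Fin N) (Fin N) ℂ) ⊗ₖ σZ)) -
            ∑ k, p k • ρXZ k) ⊗ₖ (1 : Matrix (Fin M) (Fin M) ℂ) +
          ∑ k, p k • (ρXZ k ⊗ₖ ((1 : Matrix (Fin M) (Fin M) ℂ) - ρB k)) := by
      simp only [Matrix.kronecker_smul, Matrix.smul_kronecker, sub_kron, sum_kron,
        kron_sub, smul_sub, Finset.sum_sub_distrib, smul_smul, hs]
      abel
    rw [key]
    exact (posSemidef_kron hle .one).add (posSemidef_sum fun k =>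
      posSemidef_real_smul (hp k) (posSemidef_kron (hρXZ k).1
        (one_sub_posSemidef (hρB k).1 (hρB k).2)))
end

section
/- Leakage chain rule for quantum min-entropy (general states): Let N, K, M ≥ 1 and let ρ be a density matrix on ℂ^{N·K·M} with rows and columns indexed by (Fin N × Fin K) × Fin M. Define the marginal (partial trace over the third system) ρ_XZ as the matrix indexed by Fin N × Fin K with entries ρ_XZ(u, v) = Σ_{m : Fin M} ρ((u,m), (v,m)). Suppose there exist c ≥ 0 and a density matrix σ_Z on ℂ^K with ρ_XZ ≤ c • ((N:ℝ)⁻¹ • (I_N ⊗ σ_Z)) in the Loewner order. Then there exists a density matrix σ_ZB on ℂ^{K·M} (indexed by Fin K × Fin M) such that ρ ≤ (c·M²) • ((N:ℝ)⁻¹ • (I_N ⊗ σ_ZB)), where I_N ⊗ σ_ZB is reindexed via the natural identification of Fin N × (Fin K × Fin M) with (Fin N × Fin K) × Fin M. (In entropy terms: if the B-system has ℓ = log₂ M qubits, then H_min(X|ZB)_ρ ≥ H_min(X|Z)_ρ − 2ℓ, and this is tight.) -/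
open Matrix
open scoped ComplexOrder Kronecker

lemma smulPSD {n : Type*} [Fintype n] {A : Matrix n n ℂ} (hA : A.PosSemidef)
    {r : ℝ} (hr : 0 ≤ r) : (r • A).PosSemidef := by
  refine posSemidef_iff_dotProduct_mulVec.mpr ⟨?_, ?_⟩
  · have h := hA.1
    ext i j
    simp only [conjTranspose_apply, Matrix.smul_apply, star_smul, star_trivial]
    rw [← conjTranspose_apply, h]
  · intro x
    rw [smul_mulVec, dotProduct_smul]
    have := hA.dotProduct_mulVec_nonneg x
    rw [Complex.real_smul]
    exact mul_nonneg (by exact_mod_cast Complex.zero_le_real.mpr hr) this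

lemma posSemidef_iff_eq_transpose_mul_self {n : Type*} [Fintype n] [DecidableEq n]
    {A : Matrix n n ℂ} : A.PosSemidef ↔ ∃ B : Matrix n n ℂ, A = Bᴴ * B := by
  open MatrixOrder in
  exact ⟨fun hA => CStarAlgebra.nonneg_iff_eq_star_mul_self.mp hA.nonneg,
    fun ⟨B, hB⟩ => hB ▸ posSemidef_conjTranspose_mul_self B⟩

lemma conjTranspose_kron {l m n p : Type*} (A : Matrix l m ℂ) (B : Matrix n p ℂ) :
    (A ⊗ₖ B)ᴴ = Aᴴ ⊗ₖ Bᴴ := by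
  ext ⟨i, j⟩ ⟨k, s⟩
  simp [conjTranspose_apply, kroneckerMap_apply, mul_comm]

lemma kronPSD {m n : Type*} [Fintype m] [Fintype n] [DecidableEq m] [DecidableEq n]
    {A : Matrix m m ℂ} {B : Matrix n n ℂ} (hA : A.PosSemidef) (hB : B.PosSemidef) :
    (A ⊗ₖ B).PosSemidef := by
  obtain ⟨C, rfl⟩ := posSemidef_iff_eq_transpose_mul_self.mp hA
  obtain ⟨D, rfl⟩ := posSemidef_iff_eq_transpose_mul_self.mp hB
  rw [mul_kronecker_mul, ← conjTranspose_kron]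
  exact posSemidef_conjTranspose_mul_self _

lemma sumsq (M : ℕ) (z : Fin M → ℂ) :
    Complex.normSq (∑ m, z m) ≤ M * ∑ m, Complex.normSq (z m) := by
  have h1 : ‖∑ m, z m‖ ≤ ∑ m, ‖z m‖ := by
    simpa using norm_sum_le Finset.univ z
  have h2 : (∑ m, ‖z m‖) ^ 2 ≤ M * ∑ m, ‖z m‖ ^ 2 := by
    simpa using sq_sum_le_card_mul_sum_sq (s := Finset.univ) (f := fun m => ‖z m‖)
  calc Complex.normSq (∑ m, z m) = ‖∑ m, z m‖ ^ 2 := (Complex.sq_norm _).symm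
    _ ≤ (∑ m, ‖z m‖) ^ 2 := by
        apply pow_le_pow_left₀ (norm_nonneg _) h1
    _ ≤ M * ∑ m, ‖z m‖ ^ 2 := h2
    _ = M * ∑ m, Complex.normSq (z m) := by simp [Complex.sq_norm]

lemma key {A : Type*} [Fintype A] [DecidableEq A] {M : ℕ}
    {ρ : Matrix (A × Fin M) (A × Fin M) ℂ} (hρ : ρ.PosSemidef) :
    ((M:ℝ) • ((Matrix.of fun u v : A => ∑ m : Fin M, ρ (u,m) (v,m)) ⊗ₖ
        (1 : Matrix (Fin M) (Fin M) ℂ)) - ρ).PosSemidef := by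
  have hstar : ∀ p q, star (ρ p q) = ρ q p := by
    intro p q
    have := congrFun (congrFun hρ.1 q) p
    simpa [conjTranspose_apply] using this
  set P : Matrix A A ℂ := Matrix.of fun u v : A => ∑ m : Fin M, ρ (u,m) (v,m) with hPdef
  have hP : P.IsHermitian := by
    ext u v
    simp only [hPdef, conjTranspose_apply, of_apply, star_sum]
    exact Finset.sum_congr rfl fun m _ => hstar _ _
  refine posSemidef_iff_dotProduct_mulVec.mpr ⟨?_, ?_⟩
  · show _ = _
    have hk : (P ⊗ₖ (1 : Matrix (Fin M) (Fin M) ℂ))ᴴ = P ⊗ₖ 1 := by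
      ext ⟨i, j⟩ ⟨k, s⟩
      simp only [conjTranspose_apply, kroneckerMap_apply, star_mul', one_apply]
      rw [← conjTranspose_apply P, hP.eq]
      simp [eq_comm]
    ext p q
    have h1 := congrFun (congrFun hk p) q
    simp only [conjTranspose_apply] at h1
    simp only [conjTranspose_apply, Matrix.sub_apply, Matrix.smul_apply, star_sub, star_smul, star_trivial]
    rw [h1, hstar]
  · intro x
    obtain ⟨B, hB⟩ := posSemidef_iff_eq_transpose_mul_self.mp hρ
    set v : Fin M → Fin M → (A × Fin M → ℂ) :=
      fun m m' p => if p.2 = m' then x (p.1, m) else 0 with hv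
    have hx : x = ∑ m, v m m := by
      funext p
      simp [hv]
    have claim1 : star x ⬝ᵥ ((P ⊗ₖ (1 : Matrix (Fin M) (Fin M) ℂ)) *ᵥ x)
        = ∑ m, ∑ m', star (v m m') ⬝ᵥ (ρ *ᵥ v m m') := by
      simp only [hv, hPdef, dotProduct, mulVec, Fintype.sum_prod_type, kroneckerMap_apply,
        one_apply, Pi.star_apply, of_apply, mul_ite, mul_one, mul_zero, ite_mul, zero_mul,
        Finset.sum_ite_eq', Finset.sum_ite_eq, Finset.mem_univ, if_true,
        apply_ite (star : ℂ → ℂ), star_zero, Finset.mul_sum, Finset.sum_mul,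
        Finset.sum_ite_irrel, Finset.sum_const_zero]
      conv_lhs => rw [Finset.sum_comm]
      refine Finset.sum_congr rfl fun b _ => ?_
      conv_rhs => rw [Finset.sum_comm]
      refine Finset.sum_congr rfl fun u _ => ?_
      conv_rhs => rw [Finset.sum_comm]
    have hQ : ∀ w : A × Fin M → ℂ, star w ⬝ᵥ (ρ *ᵥ w)
        = ((∑ i, Complex.normSq ((B *ᵥ w) i) : ℝ) : ℂ) := by
      intro w
      rw [hB, ← mulVec_mulVec, dotProduct_mulVec, vecMul_conjTranspose, star_star]
      push_cast
      simp [dotProduct, Complex.normSq_eq_conj_mul_self, Complex.star_def]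
    have hBx : B *ᵥ x = ∑ m, B *ᵥ v m m := by
      rw [hx, ← mulVecLin_apply, map_sum]
      simp [mulVecLin_apply]
    have goal_eq : star x ⬝ᵥ (((M:ℝ) • (P ⊗ₖ (1 : Matrix (Fin M) (Fin M) ℂ)) - ρ) *ᵥ x)
        = (((M:ℝ) * ∑ m, ∑ m', ∑ i, Complex.normSq ((B *ᵥ v m m') i)
            - ∑ i, Complex.normSq ((B *ᵥ x) i) : ℝ) : ℂ) := by
      rw [sub_mulVec, dotProduct_sub, smul_mulVec, dotProduct_smul, claim1, hQ]
      simp only [hQ]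
      push_cast
      rw [Complex.real_smul]
      push_cast
      ring
    rw [goal_eq]
    rw [Complex.zero_le_real]
    have h1 : ∑ i, Complex.normSq ((B *ᵥ x) i)
        ≤ (M:ℝ) * ∑ m, ∑ m', ∑ i, Complex.normSq ((B *ᵥ v m m') i) := by
      calc ∑ i, Complex.normSq ((B *ᵥ x) i)
          = ∑ i, Complex.normSq (∑ m, (B *ᵥ v m m) i) := by
            rw [hBx]; simp [Finset.sum_apply]
        _ ≤ ∑ i, (M:ℝ) * ∑ m, Complex.normSq ((B *ᵥ v m m) i) :=
            Finset.sum_le_sum fun i _ => sumsq M _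
        _ = (M:ℝ) * ∑ m, ∑ i, Complex.normSq ((B *ᵥ v m m) i) := by
            rw [← Finset.mul_sum, Finset.sum_comm]
        _ ≤ (M:ℝ) * ∑ m, ∑ m', ∑ i, Complex.normSq ((B *ᵥ v m m') i) := by
            refine mul_le_mul_of_nonneg_left ?_ (Nat.cast_nonneg M)
            refine Finset.sum_le_sum fun m _ => ?_
            exact Finset.single_le_sum
              (f := fun m' => ∑ i, Complex.normSq ((B *ᵥ v m m') i))
              (fun m' _ => Finset.sum_nonneg fun i _ => Complex.normSq_nonneg _)
              (Finset.mem_univ m)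
    linarith

/-- **Leakage chain rule for quantum min-entropy (general states).**
Let `ρ` be a density matrix on `(X ⊗ Z) ⊗ B` where the `B` system has dimension `M`, and let
`ρ_XZ` be its marginal (partial trace over `B`). If `ρ_XZ ≤ c • ((1/N)·I_N ⊗ σ_Z)` for some
density `σ_Z` (i.e. `H_min(X|Z)_ρ ≥ log N − log c`), then there is a density `σ_ZB` with
`ρ ≤ (c·M²) • ((1/N)·I_N ⊗ σ_ZB)`, i.e. `H_min(X|ZB)_ρ ≥ H_min(X|Z)_ρ − 2·log M`. -/
theorem leakage_chain_rule_general (N K M : ℕ) (hN : 1 ≤ N) (hK : 1 ≤ K) (hM : 1 ≤ M)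
    (ρ : Matrix ((Fin N × Fin K) × Fin M) ((Fin N × Fin K) × Fin M) ℂ)
    (hρ : ρ.PosSemidef ∧ ρ.trace = 1)
    (c : ℝ) (hc : 0 ≤ c)
    (σZ : Matrix (Fin K) (Fin K) ℂ) (hσZ : σZ.PosSemidef ∧ σZ.trace = 1)
    (hle : (c • ((N : ℝ)⁻¹ • ((1 : Matrix (Fin N) (Fin N) ℂ) ⊗ₖ σZ)) -
        Matrix.of (fun u v : Fin N × Fin K => ∑ m : Fin M, ρ (u, m) (v, m))).PosSemidef) :
    ∃ σZB : Matrix (Fin K × Fin M) (Fin K × Fin M) ℂ,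
      σZB.PosSemidef ∧ σZB.trace = 1 ∧
      ((c * M ^ 2) • ((N : ℝ)⁻¹ •
          (Matrix.reindex (Equiv.prodAssoc (Fin N) (Fin K) (Fin M)).symm
            (Equiv.prodAssoc (Fin N) (Fin K) (Fin M)).symm
            ((1 : Matrix (Fin N) (Fin N) ℂ) ⊗ₖ σZB))) - ρ).PosSemidef := by
  obtain ⟨hρPSD, hρtr⟩ := hρ
  obtain ⟨hσPSD, hσtr⟩ := hσZ
  have hM0 : (M : ℝ) ≠ 0 := Nat.cast_ne_zero.mpr (by omega)
  refine ⟨σZ ⊗ₖ ((M:ℝ)⁻¹ • (1 : Matrix (Fin M) (Fin M) ℂ)), ?_, ?_, ?_⟩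
  · exact kronPSD hσPSD (smulPSD Matrix.PosSemidef.one (by positivity))
  · rw [trace_kronecker, hσtr, one_mul, trace_smul, trace_one]
    simp only [Fintype.card_fin]
    rw [Complex.real_smul]
    push_cast
    field_simp
  · have hdecomp : (c * M ^ 2) • ((N : ℝ)⁻¹ •
          (Matrix.reindex (Equiv.prodAssoc (Fin N) (Fin K) (Fin M)).symm
            (Equiv.prodAssoc (Fin N) (Fin K) (Fin M)).symm
            ((1 : Matrix (Fin N) (Fin N) ℂ) ⊗ₖ (σZ ⊗ₖ ((M:ℝ)⁻¹ • (1 : Matrix (Fin M) (Fin M) ℂ)))))) - ρ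
        = (M:ℝ) • ((c • ((N : ℝ)⁻¹ • ((1 : Matrix (Fin N) (Fin N) ℂ) ⊗ₖ σZ)) -
              Matrix.of (fun u v : Fin N × Fin K => ∑ m : Fin M, ρ (u, m) (v, m))) ⊗ₖ
              (1 : Matrix (Fin M) (Fin M) ℂ))
          + ((M:ℝ) • ((Matrix.of fun u v : Fin N × Fin K => ∑ m : Fin M, ρ (u,m) (v,m)) ⊗ₖ
              (1 : Matrix (Fin M) (Fin M) ℂ)) - ρ) := by
      ext ⟨⟨n, k⟩, m⟩ ⟨⟨n', k'⟩, m'⟩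
      simp only [Matrix.reindex_apply, Matrix.submatrix_apply, Equiv.symm_symm,
        Equiv.prodAssoc_apply, kroneckerMap_apply, Matrix.smul_apply, Matrix.sub_apply,
        Matrix.add_apply, Matrix.of_apply, Matrix.one_apply, Complex.real_smul]
      split_ifs <;> push_cast <;> ring_nf <;> field_simp <;> ring
    rw [hdecomp]
    exact (smulPSD (kronPSD hle Matrix.PosSemidef.one) (Nat.cast_nonneg M)).add (key hρPSD)
end

section
/- Impossibility of quantum gap amplification: For all real numbers p, q with 0 < q < p < 1, let ψ = (√(1−p), √p) and φ = (√(1−q), √q) be vectors in ℂ². Then there is no 2×2 complex matrix Π such that Π and I − Π are both positive semidefinite, Re(ψ* Π ψ) > p, and Re(φ* Π φ) < q (here ψ* Π ψ = Σ_{i,j} conj(ψ_i) Π_{i,j} ψ_j). -/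
open Matrix
open scoped ComplexOrder

/-- The pure state `(√(1−r), √r)` on one qubit, accepted with probability exactly `r`
by the measurement in the computational basis. -/
noncomputable def ampState (r : ℝ) : Fin 2 → ℂ :=
  ![(Real.sqrt (1 - r) : ℂ), (Real.sqrt r : ℂ)]

lemma ampState_re_sum (r : ℝ) (Pm : Matrix (Fin 2) (Fin 2) ℂ)
    (hherm : Pm 1 0 = (starRingEnd ℂ) (Pm 0 1)) :
    (∑ i, ∑ j, (starRingEnd ℂ) (ampState r i) * Pm i j * ampState r j).re =
      (Pm 0 0).re * (Real.sqrt (1 - r))^2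
        + 2 * (Pm 0 1).re * (Real.sqrt (1 - r) * Real.sqrt r)
        + (Pm 1 1).re * (Real.sqrt r)^2 := by
  simp [ampState, Fin.sum_univ_two, hherm, Complex.add_re, Complex.mul_re,
    Complex.conj_re, Complex.conj_im, Complex.ofReal_re, Complex.ofReal_im]
  ring

/-- **Impossibility of quantum gap amplification.**
For `0 < q < p < 1`, with `ψ = (√(1−p), √p)` and `φ = (√(1−q), √q)`, there is no binary
measurement (BPOVM) `Π` on one qubit accepting `ψ` with probability greater than `p` and
`φ` with probability less than `q`. -/
theorem gap_amplification_impossible (p q : ℝ) (hq0 : 0 < q) (hqp : q < p) (hp1 : p < 1) :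
    ¬ ∃ Pm : Matrix (Fin 2) (Fin 2) ℂ,
        Pm.PosSemidef ∧ ((1 : Matrix (Fin 2) (Fin 2) ℂ) - Pm).PosSemidef ∧
        p < (∑ i, ∑ j, (starRingEnd ℂ) (ampState p i) * Pm i j * ampState p j).re ∧
        (∑ i, ∑ j, (starRingEnd ℂ) (ampState q i) * Pm i j * ampState q j).re < q := by
  rintro ⟨Pm, hP, hQ, h1, h2⟩
  have hp0 : 0 < p := hq0.trans hqp
  have hq1 : q < 1 := hqp.trans hp1
  -- entries
  set a : ℝ := (Pm 0 0).re with ha_def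
  set c : ℝ := (Pm 0 1).re with hc_def
  set d : ℝ := (Pm 1 1).re with hd_def
  have hherm : Pm 1 0 = (starRingEnd ℂ) (Pm 0 1) := by
    have := hP.isHermitian
    exact (congrFun (congrFun this 1) 0).symm ▸ rfl
  have ha : 0 ≤ a := by
    have := hP.re_dotProduct_nonneg (Pi.single 0 1)
    simpa [dotProduct, mulVec, Fin.sum_univ_two] using this
  have hd : d ≤ 1 := by
    have := hQ.re_dotProduct_nonneg (Pi.single 1 1)
    simp only [dotProduct, mulVec, Fin.sum_univ_two, Matrix.sub_apply, Matrix.one_apply] at this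
    simp only [Pi.single_apply] at this
    norm_num at this
    linarith [this]
  -- square roots
  set sp := Real.sqrt p with hsp_def
  set cp := Real.sqrt (1 - p) with hcp_def
  set sq := Real.sqrt q with hsq_def
  set cq := Real.sqrt (1 - q) with hcq_def
  have hsp2 : sp^2 = p := Real.sq_sqrt hp0.le
  have hcp2 : cp^2 = 1 - p := Real.sq_sqrt (by linarith)
  have hsq2 : sq^2 = q := Real.sq_sqrt hq0.le
  have hcq2 : cq^2 = 1 - q := Real.sq_sqrt (by linarith)
  have hsp0 : 0 < sp := Real.sqrt_pos.mpr hp0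
  have hcp0 : 0 < cp := Real.sqrt_pos.mpr (by linarith)
  have hsq0 : 0 < sq := Real.sqrt_pos.mpr hq0
  have hcq0 : 0 < cq := Real.sqrt_pos.mpr (by linarith)
  rw [ampState_re_sum p Pm hherm] at h1
  rw [ampState_re_sum q Pm hherm] at h2
  -- key comparison: cp * sq < cq * sp
  have key : cp * sq < cq * sp := by
    have h5 : cp * sq = Real.sqrt ((1 - p) * q) := by
      rw [hcp_def, hsq_def, ← Real.sqrt_mul (by linarith)]
    have h6 : cq * sp = Real.sqrt ((1 - q) * p) := by
      rw [hcq_def, hsp_def, ← Real.sqrt_mul (by linarith)]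
    rw [h5, h6]
    apply Real.sqrt_lt_sqrt (mul_nonneg (by linarith) hq0.le)
    nlinarith
  -- the two amplification inequalities, rewritten
  have H1 : 0 < a * cp^2 + 2*c * (cp * sp) - (1 - d) * sp^2 := by
    rw [hsp2, hcp2] at h1 ⊢; nlinarith [h1]
  have H2 : a * cq^2 + 2*c * (cq * sq) - (1 - d) * sq^2 < 0 := by
    rw [hsq2, hcq2] at h2 ⊢; nlinarith [h2]
  have h3 : 0 < (cq * sq) * (a * cp^2 + 2*c * (cp * sp) - (1 - d) * sp^2) :=
    mul_pos (mul_pos hcq0 hsq0) H1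
  have h4 : (cp * sp) * (a * cq^2 + 2*c * (cq * sq) - (1 - d) * sq^2) < 0 :=
    mul_neg_of_pos_of_neg (mul_pos hcp0 hsp0) H2
  have h5 : 0 ≤ (cq * sp - cp * sq) * (a * (cp * cq) + (1 - d) * (sp * sq)) := by
    apply mul_nonneg (by linarith)
    have := mul_nonneg ha (mul_pos hcp0 hcq0).le
    have := mul_nonneg (by linarith : (0:ℝ) ≤ 1 - d) (mul_pos hsp0 hsq0).le
    linarith
  nlinarith [h3, h4, h5]
end

section
/- Density in a pure-tensor state forces product form: Let M, N ≥ 1, let ψ ∈ ℂ^M be a unit vector, let ρ be a density matrix on ℂ^N, and let δ ∈ (0, 1]. If σ' is a density matrix on ℂ^{M·N} (with rows and columns indexed by Fin M × Fin N) satisfying σ' ≤ (1/δ) • ((ψψ*) ⊗ ρ) in the Loewner order, where ψψ* is the rank-one matrix with entries ψ_i · conj(ψ_j), then there exists a density matrix σ on ℂ^N such that σ ≤ (1/δ) • ρ and σ' = (ψψ*) ⊗ σ. -/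
open Matrix
open scoped ComplexOrder Kronecker

/-- **Density in a pure-tensor state forces product form.**
If `ψ` is a unit vector, `ρ` is a density matrix, `δ ∈ (0,1]`, and a density matrix `σ'` is
`δ`-dense in `(ψψ*) ⊗ ρ` (i.e. `σ' ≤ (1/δ) • ((ψψ*) ⊗ ρ)` in the Loewner order), then
`σ' = (ψψ*) ⊗ σ` for some density matrix `σ` that is `δ`-dense in `ρ`. -/
theorem dense_in_pure_tensor (M N : ℕ) (hM : 1 ≤ M) (hN : 1 ≤ N)
    (ψ : Fin M → ℂ) (hψ : ∑ i, Complex.normSq (ψ i) = 1)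
    (ρ : Matrix (Fin N) (Fin N) ℂ) (hρ : ρ.PosSemidef ∧ ρ.trace = 1)
    (δ : ℝ) (hδ0 : 0 < δ) (hδ1 : δ ≤ 1)
    (σ' : Matrix (Fin M × Fin N) (Fin M × Fin N) ℂ)
    (hσ' : σ'.PosSemidef ∧ σ'.trace = 1)
    (hdense : (δ⁻¹ • (Matrix.vecMulVec ψ (star ψ) ⊗ₖ ρ) - σ').PosSemidef) :
    ∃ σ : Matrix (Fin N) (Fin N) ℂ,
      (σ.PosSemidef ∧ σ.trace = 1) ∧
      (δ⁻¹ • ρ - σ).PosSemidef ∧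
      σ' = Matrix.vecMulVec ψ (star ψ) ⊗ₖ σ := by
  obtain ⟨hρp, hρtr⟩ := hρ
  obtain ⟨hσp, hσtr⟩ := hσ'
  -- unit norm in complex form
  have hψ1 : ∑ i, star (ψ i) * ψ i = (1 : ℂ) := by
    have h1 : ∑ i, star (ψ i) * ψ i = ((∑ i, Complex.normSq (ψ i) : ℝ) : ℂ) := by
      push_cast
      refine Finset.sum_congr rfl fun i _ => ?_
      rw [Complex.normSq_eq_conj_mul_self]
      rfl
    rw [h1, hψ]; norm_num
  have hψ1' : ∑ i, ψ i * star (ψ i) = (1 : ℂ) := by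
    rw [← hψ1]; exact Finset.sum_congr rfl fun i _ => mul_comm _ _
  set P : Matrix (Fin M) (Fin M) ℂ := Matrix.vecMulVec ψ (star ψ) with hP
  -- hermiticity of σ' entrywise
  have herm : ∀ p q, σ' p q = star (σ' q p) := by
    intro p q
    conv_lhs => rw [← hσp.1]
    rw [conjTranspose_apply]
  -- kernel lemma
  have hker : ∀ u : Fin M × Fin N → ℂ,
      (∀ l : Fin N, ∑ j, star (ψ j) * u (j, l) = 0) → σ' *ᵥ u = 0 := by
    intro u hu
    have hKu : (P ⊗ₖ ρ) *ᵥ u = 0 := by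
      funext p
      obtain ⟨i, k⟩ := p
      simp only [mulVec, dotProduct, Fintype.sum_prod_type, kroneckerMap_apply,
        vecMulVec_apply, Pi.star_apply, Pi.zero_apply, hP]
      rw [Finset.sum_comm]
      refine Finset.sum_eq_zero fun l _ => ?_
      calc ∑ j, ψ i * star (ψ j) * ρ k l * u (j, l)
          = ψ i * ρ k l * ∑ j, star (ψ j) * u (j, l) := by
            rw [Finset.mul_sum]; exact Finset.sum_congr rfl fun j _ => by ring
        _ = 0 := by rw [hu l, mul_zero]
    have hneg : star u ⬝ᵥ (δ⁻¹ • (P ⊗ₖ ρ) - σ') *ᵥ u = -(star u ⬝ᵥ σ' *ᵥ u) := by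
      rw [sub_mulVec, smul_mulVec, hKu, smul_zero, zero_sub, dotProduct_neg]
    have h2 := hdense.dotProduct_mulVec_nonneg u
    rw [hneg] at h2
    have h3 := hσp.dotProduct_mulVec_nonneg u
    have h4 : star u ⬝ᵥ σ' *ᵥ u = 0 := le_antisymm (neg_nonneg.mp h2) h3
    exact (hσp.dotProduct_mulVec_zero_iff u).mp h4
  -- column structure
  have hcol : ∀ (p : Fin M × Fin N) (j : Fin M) (l : Fin N),
      σ' p (j, l) = star (ψ j) * ∑ m, ψ m * σ' p (m, l) := by
    intro p j l
    set u : Fin M × Fin N → ℂ := fun q =>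
      (if q.1 = j then 1 else 0) * (if q.2 = l then 1 else 0)
        - star (ψ j) * ψ q.1 * (if q.2 = l then 1 else 0) with hudef
    have hu0 : ∀ l' : Fin N, ∑ m, star (ψ m) * u (m, l') = 0 := by
      intro l'
      rcases eq_or_ne l' l with rfl | h
      · calc ∑ m, star (ψ m) * u (m, l')
            = ∑ m, ((if m = j then star (ψ m) else 0)
                - star (ψ j) * (star (ψ m) * ψ m)) := by
              refine Finset.sum_congr rfl fun m _ => ?_
              simp only [hudef]
              split_ifs <;> ring
          _ = star (ψ j) - star (ψ j) * ∑ m, star (ψ m) * ψ m := by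
              rw [Finset.sum_sub_distrib,
                Finset.sum_ite_eq' Finset.univ j (fun m => star (ψ m)),
                ← Finset.mul_sum]
              simp
          _ = 0 := by rw [hψ1, mul_one, sub_self]
      · refine Finset.sum_eq_zero fun m _ => ?_
        simp only [hudef]
        simp [h]
    have h0 := congrFun (hker u hu0) p
    simp only [mulVec, dotProduct, Pi.zero_apply, Fintype.sum_prod_type] at h0
    have expand : ∑ m, ∑ n, σ' p (m, n) * u (m, n)
        = σ' p (j, l) - star (ψ j) * ∑ m, ψ m * σ' p (m, l) := by
      calc ∑ m, ∑ n, σ' p (m, n) * u (m, n)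
          = ∑ m, ∑ n, (if n = l then
              σ' p (m, n) * ((if m = j then 1 else 0) - star (ψ j) * ψ m) else 0) := by
            refine Finset.sum_congr rfl fun m _ => Finset.sum_congr rfl fun n _ => ?_
            simp only [hudef]
            split_ifs <;> ring
        _ = ∑ m, σ' p (m, l) * ((if m = j then 1 else 0) - star (ψ j) * ψ m) := by
            refine Finset.sum_congr rfl fun m _ => ?_
            rw [Finset.sum_ite_eq' Finset.univ l
              (fun n => σ' p (m, n) * ((if m = j then 1 else 0) - star (ψ j) * ψ m))]
            simp
        _ = ∑ m, ((if m = j then σ' p (m, l) else 0)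
              - star (ψ j) * (ψ m * σ' p (m, l))) := by
            refine Finset.sum_congr rfl fun m _ => ?_
            split_ifs <;> ring
        _ = σ' p (j, l) - star (ψ j) * ∑ m, ψ m * σ' p (m, l) := by
            rw [Finset.sum_sub_distrib,
              Finset.sum_ite_eq' Finset.univ j (fun m => σ' p (m, l)),
              ← Finset.mul_sum]
            simp
    rw [expand] at h0
    exact (sub_eq_zero.mp h0)
  -- row structure via hermiticity
  have hrow : ∀ (i : Fin M) (k : Fin N) (q : Fin M × Fin N),
      σ' (i, k) q = ψ i * ∑ m, star (ψ m) * σ' (m, k) q := by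
    intro i k q
    calc σ' (i, k) q = star (σ' q (i, k)) := herm _ _
      _ = star (star (ψ i) * ∑ m, ψ m * σ' q (m, k)) := by rw [hcol q i k]
      _ = ψ i * ∑ m, star (ψ m) * star (σ' q (m, k)) := by
          rw [StarMul.star_mul, star_star, mul_comm, star_sum]
          congr 1
          exact Finset.sum_congr rfl fun m _ => by rw [StarMul.star_mul]; ring
      _ = ψ i * ∑ m, star (ψ m) * σ' (m, k) q := by
          congr 1
          exact Finset.sum_congr rfl fun m _ => by rw [← herm]
  -- the embedding matrix
  set A : Matrix (Fin M × Fin N) (Fin N) ℂ :=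
    Matrix.of (fun p l => ψ p.1 * (if p.2 = l then 1 else 0)) with hA
  have hσapp : ∀ (B : Matrix (Fin M × Fin N) (Fin M × Fin N) ℂ) (k l : Fin N),
      (Aᴴ * B * A) k l = ∑ m, ∑ n, star (ψ m) * (ψ n * B (m, k) (n, l)) := by
    intro B k l
    have step : ∀ q : Fin M × Fin N,
        (∑ p : Fin M × Fin N, star (A p k) * B p q) = ∑ m, star (ψ m) * B (m, k) q := by
      intro q
      rw [Fintype.sum_prod_type]
      refine Finset.sum_congr rfl fun m _ => ?_
      simp [hA, apply_ite, Finset.sum_ite_eq']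
    calc (Aᴴ * B * A) k l = ∑ q, (∑ p, star (A p k) * B p q) * A q l := by
          simp only [mul_apply, conjTranspose_apply]
      _ = ∑ q : Fin M × Fin N, (∑ m, star (ψ m) * B (m, k) q) * A q l := by
          exact Finset.sum_congr rfl fun q _ => by rw [step q]
      _ = ∑ n, ∑ m, star (ψ m) * (ψ n * B (m, k) (n, l)) := by
          rw [Fintype.sum_prod_type]
          refine Finset.sum_congr rfl fun n _ => ?_
          have hterm : ∀ l', (∑ m, star (ψ m) * B (m, k) (n, l')) * A (n, l') l
              = if l' = l then ∑ m, star (ψ m) * (ψ n * B (m, k) (n, l')) else 0 := by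
            intro l'
            simp only [hA, Matrix.of_apply]
            split_ifs
            · rw [mul_one, Finset.sum_mul]
              exact Finset.sum_congr rfl fun m _ => by ring
            · rw [mul_zero, mul_zero]
          rw [Finset.sum_congr rfl fun l' _ => hterm l', Finset.sum_ite_eq' Finset.univ l _]
          simp
      _ = ∑ m, ∑ n, star (ψ m) * (ψ n * B (m, k) (n, l)) := Finset.sum_comm
  set σ : Matrix (Fin N) (Fin N) ℂ := Aᴴ * σ' * A with hσdef
  have hσpsd : σ.PosSemidef := by rw [hσdef]; exact hσp.conjTranspose_mul_mul_same A
  have hσe : ∀ k l, σ k l = ∑ m, ∑ n, star (ψ m) * (ψ n * σ' (m, k) (n, l)) := by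
    intro k l
    rw [hσdef]; exact hσapp σ' k l
  -- product form entrywise
  have hent : ∀ (i j : Fin M) (k l : Fin N),
      σ' (i, k) (j, l) = ψ i * star (ψ j) * σ k l := by
    intro i j k l
    calc σ' (i, k) (j, l) = ψ i * ∑ m, star (ψ m) * σ' (m, k) (j, l) := hrow i k (j, l)
      _ = ψ i * ∑ m, star (ψ m) * (star (ψ j) * ∑ n, ψ n * σ' (m, k) (n, l)) := by
          congr 1
          exact Finset.sum_congr rfl fun m _ => by rw [hcol (m, k) j l]
      _ = ψ i * (star (ψ j) * ∑ m, ∑ n, star (ψ m) * (ψ n * σ' (m, k) (n, l))) := by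
          congr 1
          rw [Finset.mul_sum]
          refine Finset.sum_congr rfl fun m _ => ?_
          simp only [Finset.mul_sum]
          exact Finset.sum_congr rfl fun n _ => by ring
      _ = ψ i * star (ψ j) * σ k l := by rw [hσe k l, mul_assoc]
  -- trace
  have htrσ : σ.trace = 1 := by
    have htr : σ'.trace = σ.trace := by
      simp only [Matrix.trace, Matrix.diag]
      rw [Fintype.sum_prod_type]
      calc ∑ i, ∑ k, σ' (i, k) (i, k) = ∑ i, ∑ k, ψ i * star (ψ i) * σ k k :=
            Finset.sum_congr rfl fun i _ => Finset.sum_congr rfl fun k _ => hent i i k k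
        _ = (∑ i, ψ i * star (ψ i)) * ∑ k, σ k k := by
            rw [Finset.sum_mul]
            exact Finset.sum_congr rfl fun i _ => by rw [Finset.mul_sum]
        _ = ∑ k, σ k k := by rw [hψ1', one_mul]
    rw [← htr, hσtr]
  -- density
  have hAρ : Aᴴ * (P ⊗ₖ ρ) * A = ρ := by
    ext k l
    rw [hσapp (P ⊗ₖ ρ) k l]
    have hterm : ∀ m n, star (ψ m) * (ψ n * (P ⊗ₖ ρ) (m, k) (n, l))
        = (star (ψ m) * ψ m) * ((ψ n * star (ψ n)) * ρ k l) := by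
      intro m n
      simp only [kroneckerMap_apply, vecMulVec_apply, Pi.star_apply, hP]
      ring
    calc ∑ m, ∑ n, star (ψ m) * (ψ n * (P ⊗ₖ ρ) (m, k) (n, l))
        = ∑ m, (star (ψ m) * ψ m) * ∑ n, (ψ n * star (ψ n)) * ρ k l := by
          refine Finset.sum_congr rfl fun m _ => ?_
          rw [Finset.mul_sum]
          exact Finset.sum_congr rfl fun n _ => hterm m n
      _ = ∑ m, (star (ψ m) * ψ m) * ρ k l := by
          refine Finset.sum_congr rfl fun m _ => ?_
          rw [← Finset.sum_mul, hψ1', one_mul]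
      _ = ρ k l := by rw [← Finset.sum_mul, hψ1, one_mul]
  have hkey : δ⁻¹ • ρ - σ = Aᴴ * (δ⁻¹ • (P ⊗ₖ ρ) - σ') * A := by
    rw [Matrix.mul_sub, Matrix.sub_mul, hσdef]
    congr 1
    rw [Matrix.mul_smul, Matrix.smul_mul, hAρ]
  have hdense2 : (δ⁻¹ • ρ - σ).PosSemidef := by
    have h := hdense.conjTranspose_mul_mul_same A
    rwa [← hkey] at h
  refine ⟨σ, ⟨hσpsd, htrσ⟩, hdense2, ?_⟩
  ext p q
  obtain ⟨i, k⟩ := p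
  obtain ⟨j, l⟩ := q
  rw [kroneckerMap_apply, hent i j k l, hP, vecMulVec_apply, Pi.star_apply]
end

section
/- Reverse Dense Model Theorem (classical): Let α be a finite nonempty type, let Y, Z, M be probability mass functions on α, let δ ∈ (0, 1], and let 𝒟 be a set of functions α → ℝ taking values in [0, 1]. Suppose M is δ-dense in Y, i.e., δ · M(x) ≤ Y(x) for every x ∈ α, and suppose that for every D ∈ 𝒟, |E_{x∼Z}[D(x)] − E_{x∼M}[D(x)]| ≤ ε. Then there exists a probability mass function X on α such that Z is δ-dense in X (i.e., δ · Z(x) ≤ X(x) for all x) and for every D ∈ 𝒟, |E_{x∼X}[D(x)] − E_{x∼Y}[D(x)]| ≤ ε. -/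
/-- **Reverse Dense Model Theorem (classical).**
Let `Y, Z, M` be probability mass functions on a finite nonempty type `α`, `δ ∈ (0,1]`, and
`𝒟` a class of `[0,1]`-valued test functions. If `M` is `δ`-dense in `Y` and `Z, M` are
`ε`-indistinguishable by every `D ∈ 𝒟`, then there is a probability mass function `X` such
that `Z` is `δ`-dense in `X` and `X, Y` are `ε`-indistinguishable by every `D ∈ 𝒟`. -/
theorem reverse_dense_model_theorem (α : Type) [Fintype α] [Nonempty α]
    (Y Z M : α → ℝ)
    (hYnn : ∀ x, 0 ≤ Y x) (hYsum : ∑ x, Y x = 1)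
    (hZnn : ∀ x, 0 ≤ Z x) (hZsum : ∑ x, Z x = 1)
    (hMnn : ∀ x, 0 ≤ M x) (hMsum : ∑ x, M x = 1)
    (δ : ℝ) (hδ0 : 0 < δ) (hδ1 : δ ≤ 1)
    (𝒟 : Set (α → ℝ)) (h𝒟 : ∀ D ∈ 𝒟, ∀ x, D x ∈ Set.Icc (0 : ℝ) 1)
    (ε : ℝ)
    (hdense : ∀ x, δ * M x ≤ Y x)
    (hind : ∀ D ∈ 𝒟, |(∑ x, Z x * D x) - ∑ x, M x * D x| ≤ ε) :
    ∃ X : α → ℝ,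
      (∀ x, 0 ≤ X x) ∧ (∑ x, X x = 1) ∧
      (∀ x, δ * Z x ≤ X x) ∧
      ∀ D ∈ 𝒟, |(∑ x, X x * D x) - ∑ x, Y x * D x| ≤ ε := by
  refine ⟨fun x => Y x + δ * (Z x - M x), ?_, ?_, ?_, ?_⟩
  · intro x
    have h1 := hdense x
    have h2 : 0 ≤ δ * Z x := mul_nonneg hδ0.le (hZnn x)
    simp only []
    nlinarith
  · rw [Finset.sum_add_distrib, hYsum, ← Finset.mul_sum, Finset.sum_sub_distrib, hZsum, hMsum]
    ring
  · intro x
    have := hdense x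
    simp only []
    nlinarith
  · intro D hD
    have key : (∑ x, (Y x + δ * (Z x - M x)) * D x) - ∑ x, Y x * D x
        = δ * ((∑ x, Z x * D x) - ∑ x, M x * D x) := by
      rw [← Finset.sum_sub_distrib, mul_sub, Finset.mul_sum, Finset.mul_sum,
        ← Finset.sum_sub_distrib]
      apply Finset.sum_congr rfl
      intro x _
      ring
    rw [key, abs_mul, abs_of_pos hδ0]
    have h := hind D hD
    nlinarith [abs_nonneg ((∑ x, Z x * D x) - ∑ x, M x * D x)]
end

section
/- Concentration of quadratic forms over random signs (core of the existence of pseudorandom pure states): There exists a constant c > 0 such that for every N ≥ 1, every N×N complex matrix Π with Π and I − Π positive semidefinite, and every ε > 0, if α = (α₁, …, α_N) is chosen uniformly at random from {−1, 1}^N, then Pr[ |(1/N)·Re(Σ_{i,j} α_i α_j Π_{i,j}) − (1/N)·Re(tr Π)| ≥ ε ] ≤ 2·exp(−c·ε²·N). (In the paper's notation with N = 2^m: for the random pure state |ψ⟩ = Σ_i α_i 2^{−m/2} |i⟩, the acceptance probability ⟨ψ|Π|ψ⟩ concentrates around the acceptance probability tr(Π)/2^m of the maximally mixed state, with failure probability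 2^{−Ω(ε²·2^m)}.) -/
open Matrix
open scoped ComplexOrder Classical

namespace RSQC
open Finset
variable {N : ℕ}

noncomputable def sgn (b : Fin N → Bool) (i : Fin N) : ℝ := if b i then 1 else -1

lemma sgn_sq (b : Fin N → Bool) (i : Fin N) : sgn b i * sgn b i = 1 := by
  unfold sgn; split <;> norm_num

lemma sum_pi_bool (h : Fin N → Bool → ℝ) :
    ∑ b : Fin N → Bool, ∏ i, h i (b i) = ∏ i, (h i true + h i false) := by
  classical
  have := (Finset.prod_univ_sum (fun _ : Fin N => (Finset.univ : Finset Bool)) h).symm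
  rw [Fintype.piFinset_univ] at this
  rw [this]
  refine Finset.prod_congr rfl fun i _ => ?_
  simp [Fintype.sum_bool]

def merge (δ x y : Fin N → Bool) : Fin N → Bool := fun i => if δ i then x i else y i

lemma card_pi_bool : Fintype.card (Fin N → Bool) = 2 ^ N := by simp

lemma sum_merge (δ : Fin N → Bool) (F : (Fin N → Bool) → ℝ) :
    ∑ p : (Fin N → Bool) × (Fin N → Bool), F (merge δ p.1 p.2)
      = 2 ^ N * ∑ e, F e := by
  classical
  have hinv : Function.Involutive
      (fun p : (Fin N → Bool) × (Fin N → Bool) => (merge δ p.1 p.2, merge δ p.2 p.1)) := by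
    intro p
    refine Prod.ext ?_ ?_ <;> funext i <;> simp [merge] <;> split <;> simp
  have hbij := hinv.bijective
  have h1 : ∑ p : (Fin N → Bool) × (Fin N → Bool), F (merge δ p.1 p.2)
      = ∑ p : (Fin N → Bool) × (Fin N → Bool), F p.1 := by
    exact Fintype.sum_bijective _ hbij (fun p => F (merge δ p.1 p.2)) (fun p => F p.1)
      (fun p => rfl)
  rw [h1, Fintype.sum_prod_type]
  simp [Finset.sum_const, card_pi_bool]
  rw [← Finset.mul_sum]

lemma prod_two_support {M : Type*} [CommMonoid M] {i j : Fin N} (hij : i ≠ j)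
    (d : Fin N → M) (hd : ∀ k, k ≠ i → k ≠ j → d k = 1) : ∏ k, d k = d i * d j := by
  classical
  rw [← Finset.mul_prod_erase Finset.univ d (Finset.mem_univ i),
      ← Finset.mul_prod_erase _ d
        (by simp [Finset.mem_erase, Ne.symm hij] : j ∈ Finset.univ.erase i)]
  have h1 : ∏ k ∈ (Finset.univ.erase i).erase j, d k = 1 := by
    refine Finset.prod_eq_one ?_
    intro k hk
    simp only [Finset.mem_erase, Finset.mem_univ, and_true] at hk
    exact hd k hk.2 hk.1
  rw [h1, mul_one]

lemma two_le_of_ne {i j : Fin N} (hij : i ≠ j) : 2 ≤ N := by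
  have : 2 ≤ Fintype.card (Fin N) := Fintype.one_lt_card_iff_nontrivial.mpr ⟨⟨i, j, hij⟩⟩
  simpa using this

lemma sum_uv (b : Fin N → Bool) (i j : Fin N) :
    ∑ γ : Fin N → Bool, (if γ i then 0 else 2 * sgn b i) * (if γ j then 2 * sgn b j else 0)
      = 2 ^ N * (sgn b i * sgn b j - if i = j then 1 else 0) := by
  classical
  by_cases hij : i = j
  · subst hij
    have hz : (2:ℝ)^N * (sgn b i * sgn b i - if i = i then 1 else 0) = 0 := by
      simp [sgn_sq]
    rw [hz]
    refine Finset.sum_eq_zero fun γ _ => ?_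
    by_cases h : γ i <;> simp [h]
  · rw [if_neg hij]
    set h : Fin N → Bool → ℝ := fun k t =>
      if k = i then (if t then 0 else 2 * sgn b i)
      else if k = j then (if t then 2 * sgn b j else 0) else 1 with hh
    have key : ∀ γ : Fin N → Bool,
        (if γ i then (0:ℝ) else 2 * sgn b i) * (if γ j then 2 * sgn b j else 0)
          = ∏ k, h k (γ k) := by
      intro γ
      have hji : ¬ j = i := fun hx => hij hx.symm
      rw [prod_two_support hij (fun k => h k (γ k))
        (fun k hki hkj => by simp [hh, hki, hkj])]
      simp [hh, hij, hji]
    rw [Finset.sum_congr rfl (fun γ _ => key γ), sum_pi_bool]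
    have key2 : ∀ k, h k true + h k false = 2 * (if k = i then sgn b i else if k = j then sgn b j else 1) := by
      intro k
      have hji : ¬ j = i := fun hx => hij hx.symm
      by_cases hki : k = i
      · subst hki; simp [hh, hij]
      · by_cases hkj : k = j
        · subst hkj; simp [hh, hki, hji]
        · simp [hh, hki, hkj]; norm_num
    rw [Finset.prod_congr rfl (fun k _ => key2 k), Finset.prod_mul_distrib,
      Finset.prod_const, prod_two_support hij _ (fun k hki hkj => by simp [hki, hkj])]
    have hji : ¬ j = i := fun hx => hij hx.symm
    simp [hij, hji]

lemma exp_avg_le {ι : Type*} [Fintype ι] (f : ι → ℝ) (h : (Fintype.card ι : ℝ) ≠ 0) :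
    Real.exp ((∑ i, f i) / Fintype.card ι) ≤ (∑ i, Real.exp (f i)) / Fintype.card ι := by
  have hpos : (0:ℝ) < Fintype.card ι := by
    rcases (Fintype.card ι).eq_zero_or_pos with h0 | h0
    · exact absurd (by exact_mod_cast h0) h
    · exact_mod_cast h0
  have := convexOn_exp.map_sum_le (t := Finset.univ) (w := fun _ : ι => (Fintype.card ι : ℝ)⁻¹)
    (p := f) (fun _ _ => by positivity) (by
      simp [Finset.sum_const]
      field_simp) (fun _ _ => trivial)
  simp only [smul_eq_mul] at this
  calc Real.exp ((∑ i, f i) / Fintype.card ι)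
      = Real.exp (∑ i, (Fintype.card ι : ℝ)⁻¹ * f i) := by
        rw [← Finset.mul_sum]; rw [div_eq_inv_mul]
    _ ≤ ∑ i, (Fintype.card ι : ℝ)⁻¹ * Real.exp (f i) := this
    _ = (∑ i, Real.exp (f i)) / Fintype.card ι := by
        rw [← Finset.mul_sum, div_eq_inv_mul]

noncomputable def Hc (a : Fin N → Fin N → ℝ) (b γ : Fin N → Bool) : ℝ :=
  ∑ i, (if γ i then 0 else 2 * sgn b i) * (∑ j, a i j * (if γ j then 2 * sgn b j else 0))

noncomputable def Qc (a : Fin N → Fin N → ℝ) (b : Fin N → Bool) : ℝ :=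
  (∑ i, ∑ j, sgn b i * sgn b j * a i j) - ∑ i, a i i

lemma sum_H (a : Fin N → Fin N → ℝ) (b : Fin N → Bool) :
    ∑ γ : Fin N → Bool, Hc a b γ = 2 ^ N * Qc a b := by
  classical
  have h1 : ∀ γ : Fin N → Bool, Hc a b γ =
      ∑ i, ∑ j, ((if γ i then 0 else 2 * sgn b i) * (if γ j then 2 * sgn b j else 0)) * a i j := by
    intro γ
    unfold Hc
    refine Finset.sum_congr rfl fun i _ => ?_
    rw [Finset.mul_sum]
    refine Finset.sum_congr rfl fun j _ => by ring
  rw [Finset.sum_congr rfl fun γ _ => h1 γ, Finset.sum_comm]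
  have h2 : ∀ i, ∑ γ : Fin N → Bool, ∑ j,
      ((if γ i then (0:ℝ) else 2 * sgn b i) * (if γ j then 2 * sgn b j else 0)) * a i j
      = ∑ j, (2 ^ N * (sgn b i * sgn b j - if i = j then 1 else 0)) * a i j := by
    intro i
    rw [Finset.sum_comm]
    refine Finset.sum_congr rfl fun j _ => ?_
    rw [← Finset.sum_mul, sum_uv]
  rw [Finset.sum_congr rfl fun i _ => h2 i]
  unfold Qc
  rw [mul_sub, Finset.mul_sum, Finset.mul_sum, ← Finset.sum_sub_distrib]
  refine Finset.sum_congr rfl fun i _ => ?_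
  rw [Finset.mul_sum]
  have hdiag : (2:ℝ)^N * a i i = ∑ j, (if i = j then (2:ℝ)^N * a i j else 0) := by
    simp
  rw [hdiag, ← Finset.sum_sub_distrib]
  refine Finset.sum_congr rfl fun j _ => ?_
  by_cases hij : i = j <;> simp [hij] <;> ring

lemma sum_exp_H_le (a : Fin N → Fin N → ℝ) (t : ℝ)
    (hop : ∀ z : Fin N → ℝ, ∑ i, (∑ j, a i j * z j)^2 ≤ ∑ j, (z j)^2)
    (γ : Fin N → Bool) :
    ∑ b : Fin N → Bool, Real.exp (t * Hc a b γ) ≤ 2 ^ N * Real.exp (8 * t^2 * N) := by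
  classical
  set δ : Fin N → Bool := fun i => !(γ i) with hδ
  have hmerge := sum_merge δ (fun b => Real.exp (t * Hc a b γ))
  set c : (Fin N → Bool) → Fin N → ℝ :=
    fun y i => ∑ j, a i j * (if γ j then 2 * sgn y j else 0) with hc
  set w : (Fin N → Bool) → Fin N → ℝ := fun y i => (if γ i then 0 else 2 * t) * c y i with hw
  have hH : ∀ x y : Fin N → Bool, t * Hc a (merge δ x y) γ = ∑ i, sgn x i * w y i := by
    intro x y
    unfold Hc
    rw [Finset.mul_sum]
    refine Finset.sum_congr rfl fun i _ => ?_
    have hcy : (∑ j, a i j * (if γ j then 2 * sgn (merge δ x y) j else 0)) = c y i := by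
      rw [hc]
      refine Finset.sum_congr rfl fun j _ => ?_
      by_cases hgj : γ j <;> simp [merge, hδ, hgj, sgn]
    rw [hcy]
    have hwi : w y i = (if γ i then 0 else 2 * t) * c y i := rfl
    rw [hwi]
    by_cases hgi : γ i
    · rw [if_pos hgi, if_pos hgi]; ring
    · have hmx : sgn (merge δ x y) i = sgn x i := by simp [merge, hδ, hgi, sgn]
      rw [if_neg hgi, if_neg hgi, hmx]; ring
  have hx : ∀ y, ∑ x : Fin N → Bool, Real.exp (∑ i, sgn x i * w y i)
      ≤ 2^N * Real.exp (8 * t^2 * N) := by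
    intro y
    have h1 : ∀ x : Fin N → Bool, Real.exp (∑ i, sgn x i * w y i)
        = ∏ i, (fun (i : Fin N) (u : Bool) =>
            Real.exp (if u then w y i else -(w y i))) i (x i) := by
      intro x
      rw [Real.exp_sum]
      refine Finset.prod_congr rfl fun i _ => ?_
      by_cases hxi : x i <;> simp [sgn, hxi]
    have h3 : ∑ x : Fin N → Bool, Real.exp (∑ i, sgn x i * w y i)
        = ∏ i, (Real.exp (w y i) + Real.exp (-(w y i))) := by
      rw [Finset.sum_congr rfl fun x _ => h1 x,
        sum_pi_bool (fun i u => Real.exp (if u then w y i else -(w y i)))]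
      simp
    rw [h3]
    have h2 : ∀ i, Real.exp (w y i) + Real.exp (-(w y i)) ≤ 2 * Real.exp ((w y i)^2/2) := by
      intro i
      have hco := Real.cosh_le_exp_half_sq (w y i)
      rw [Real.cosh_eq] at hco
      linarith
    have hz : ∑ i, (w y i)^2/2 ≤ 8*t^2*N := by
      have hb1 : ∀ i, (w y i)^2/2 ≤ 2*t^2 * (c y i)^2 := by
        intro i
        rw [hw]
        by_cases hgi : γ i <;> simp [hgi] <;> nlinarith [sq_nonneg (c y i), sq_nonneg t, sq_nonneg (t * c y i)]
      have hb2 : ∑ i, (c y i)^2 ≤ 4 * N := by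
        have hzz := hop (fun j => if γ j then 2 * sgn y j else 0)
        calc ∑ i, (c y i)^2 ≤ ∑ j, (if γ j then 2 * sgn y j else (0:ℝ))^2 := by
              rw [hc]; exact hzz
          _ ≤ ∑ _j : Fin N, (4:ℝ) := Finset.sum_le_sum (fun j _ => by
              by_cases hgj : γ j <;> by_cases hyj : y j <;> simp [hgj, hyj, sgn] <;> norm_num)
          _ = 4 * N := by simp [mul_comm]
      calc ∑ i, (w y i)^2/2 ≤ ∑ i, 2*t^2*(c y i)^2 := Finset.sum_le_sum fun i _ => hb1 i
        _ = 2*t^2 * ∑ i, (c y i)^2 := by rw [Finset.mul_sum]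
        _ ≤ 2*t^2 * (4*N) := by
            have h4 : (0:ℝ) ≤ 2*t^2 := by positivity
            exact mul_le_mul_of_nonneg_left hb2 h4
        _ = 8*t^2*N := by ring
    calc ∏ i, (Real.exp (w y i) + Real.exp (-(w y i)))
        ≤ ∏ i, 2 * Real.exp ((w y i)^2/2) :=
          Finset.prod_le_prod (fun i _ => by positivity) (fun i _ => h2 i)
      _ = 2^N * Real.exp (∑ i, (w y i)^2/2) := by
          rw [Finset.prod_mul_distrib, Finset.prod_const, ← Real.exp_sum]; simp
      _ ≤ 2^N * Real.exp (8*t^2*N) := by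
          have := Real.exp_le_exp.mpr hz
          have h2N : (0:ℝ) ≤ 2^N := by positivity
          exact mul_le_mul_of_nonneg_left this h2N
  have hpair : ∑ p : (Fin N → Bool) × (Fin N → Bool), Real.exp (t * Hc a (merge δ p.1 p.2) γ)
      ≤ 2^N * (2^N * Real.exp (8*t^2*N)) := by
    rw [Fintype.sum_prod_type]
    rw [Finset.sum_comm]
    calc ∑ y : Fin N → Bool, ∑ x : Fin N → Bool, Real.exp (t * Hc a (merge δ x y) γ)
        = ∑ y : Fin N → Bool, ∑ x : Fin N → Bool, Real.exp (∑ i, sgn x i * w y i) := by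
          refine Finset.sum_congr rfl fun y _ => Finset.sum_congr rfl fun x _ => by rw [hH]
      _ ≤ ∑ _y : Fin N → Bool, 2^N * Real.exp (8*t^2*N) :=
          Finset.sum_le_sum fun y _ => hx y
      _ = 2^N * (2^N * Real.exp (8*t^2*N)) := by
          simp [Finset.sum_const, Finset.card_univ, card_pi_bool, nsmul_eq_mul]
  have h2Npos : (0:ℝ) < 2^N := by positivity
  have := hmerge ▸ hpair
  nlinarith [this]

lemma mgf_le (a : Fin N → Fin N → ℝ) (t : ℝ)
    (hop : ∀ z : Fin N → ℝ, ∑ i, (∑ j, a i j * z j)^2 ≤ ∑ j, (z j)^2) :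
    ∑ b : Fin N → Bool, Real.exp (t * Qc a b) ≤ 2 ^ N * Real.exp (8 * t^2 * N) := by
  classical
  have hcard : ((Fintype.card (Fin N → Bool) : ℝ)) ≠ 0 := by
    rw [card_pi_bool]; positivity
  have hjen : ∀ b, Real.exp (t * Qc a b)
      ≤ (∑ γ : Fin N → Bool, Real.exp (t * Hc a b γ)) / 2^N := by
    intro b
    have h1 : t * Qc a b
        = (∑ γ : Fin N → Bool, t * Hc a b γ) / (Fintype.card (Fin N → Bool)) := by
      rw [← Finset.mul_sum, sum_H, card_pi_bool]
      have h2N : ((2:ℝ))^N ≠ 0 := by positivity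
      push_cast
      field_simp
    calc Real.exp (t * Qc a b)
        = Real.exp ((∑ γ : Fin N → Bool, t * Hc a b γ) / Fintype.card (Fin N → Bool)) := by
          rw [h1]
      _ ≤ (∑ γ : Fin N → Bool, Real.exp (t * Hc a b γ)) / Fintype.card (Fin N → Bool) :=
          exp_avg_le _ hcard
      _ = (∑ γ : Fin N → Bool, Real.exp (t * Hc a b γ)) / 2^N := by
          rw [card_pi_bool]; push_cast; ring_nf
  calc ∑ b, Real.exp (t * Qc a b)
      ≤ ∑ b : Fin N → Bool, (∑ γ : Fin N → Bool, Real.exp (t * Hc a b γ)) / 2^N :=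
        Finset.sum_le_sum fun b _ => hjen b
    _ = (∑ γ : Fin N → Bool, ∑ b : Fin N → Bool, Real.exp (t * Hc a b γ)) / 2^N := by
        rw [← Finset.sum_div, Finset.sum_comm]
    _ ≤ (∑ _γ : Fin N → Bool, 2^N * Real.exp (8*t^2*N)) / 2^N := by
        gcongr with γ _
        exact sum_exp_H_le a t hop γ
    _ = 2^N * Real.exp (8*t^2*N) := by
        rw [Finset.sum_const, Finset.card_univ, card_pi_bool]
        have h2N : ((2:ℝ))^N ≠ 0 := by positivity
        field_simp
        rw [nsmul_eq_mul]; push_cast; ring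

lemma chernoff (f : (Fin N → Bool) → ℝ) (t r : ℝ) (ht : 0 ≤ t) :
    ((Finset.univ.filter (fun b : Fin N → Bool => r ≤ f b)).card : ℝ)
      ≤ Real.exp (-(t*r)) * ∑ b : Fin N → Bool, Real.exp (t * f b) := by
  classical
  have h1 : ((Finset.univ.filter (fun b : Fin N → Bool => r ≤ f b)).card : ℝ)
      = ∑ _b ∈ Finset.univ.filter (fun b : Fin N → Bool => r ≤ f b), (1:ℝ) := by simp
  rw [h1]
  have h2 : ∀ b ∈ Finset.univ.filter (fun b : Fin N → Bool => r ≤ f b),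
      (1:ℝ) ≤ Real.exp (-(t*r) + t * f b) := by
    intro b hb
    rw [Finset.mem_filter] at hb
    have : (0:ℝ) ≤ -(t*r) + t * f b := by nlinarith [hb.2]
    simpa using Real.exp_le_exp.mpr this
  calc ∑ _b ∈ Finset.univ.filter (fun b : Fin N → Bool => r ≤ f b), (1:ℝ)
      ≤ ∑ b ∈ Finset.univ.filter (fun b : Fin N → Bool => r ≤ f b),
          Real.exp (-(t*r) + t * f b) := Finset.sum_le_sum h2
    _ ≤ ∑ b : Fin N → Bool, Real.exp (-(t*r) + t * f b) :=
        Finset.sum_le_sum_of_subset_of_nonneg (Finset.filter_subset _ _)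
          (fun b _ _ => (Real.exp_pos _).le)
    _ = Real.exp (-(t*r)) * ∑ b : Fin N → Bool, Real.exp (t * f b) := by
        rw [Finset.mul_sum]
        exact Finset.sum_congr rfl fun b _ => Real.exp_add _ _

open scoped ComplexOrder in
lemma re_quad_nonneg {M : Matrix (Fin N) (Fin N) ℂ} (h : M.PosSemidef) (z : Fin N → ℝ) :
    0 ≤ ∑ i, z i * ∑ j, (M i j).re * z j := by
  have h2 := h.dotProduct_mulVec_nonneg (fun i => (z i : ℂ))
  have hre : (0:ℝ) ≤ (dotProduct (star (fun i => (z i : ℂ)))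
      (M.mulVec (fun i => (z i : ℂ)))).re := by
    have := (Complex.le_def.mp h2).1
    simpa using this
  have hcalc : (dotProduct (star (fun i => (z i : ℂ)))
      (M.mulVec (fun i => (z i : ℂ)))).re
      = ∑ i, z i * ∑ j, (M i j).re * z j := by
    simp only [dotProduct, Matrix.mulVec, Pi.star_apply, Complex.star_def,
      Complex.conj_ofReal]
    rw [Complex.re_sum]
    refine Finset.sum_congr rfl fun i _ => ?_
    rw [Complex.re_ofReal_mul]
    congr 1
    rw [Complex.re_sum]
    refine Finset.sum_congr rfl fun j _ => ?_
    rw [mul_comm (M i j), Complex.re_ofReal_mul]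
    ring
  rw [hcalc] at hre
  exact hre

lemma quad_nonneg {M : Matrix (Fin N) (Fin N) ℝ} (h : M.PosSemidef) (z : Fin N → ℝ) :
    0 ≤ ∑ i, z i * ∑ j, M i j * z j := by
  have h2 := h.dotProduct_mulVec_nonneg z
  simpa [dotProduct, Matrix.mulVec] using h2

open scoped ComplexOrder in
open scoped MatrixOrder in
lemma hop_of_bpovm (Pm : Matrix (Fin N) (Fin N) ℂ) (hP : Pm.PosSemidef)
    (hP1 : ((1 : Matrix (Fin N) (Fin N) ℂ) - Pm).PosSemidef) (z : Fin N → ℝ) :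
    ∑ i, (∑ j, (Pm i j).re * z j)^2 ≤ ∑ j, (z j)^2 := by
  classical
  set B : Matrix (Fin N) (Fin N) ℝ := Matrix.of (fun i j => (Pm i j).re) with hB
  have hsym : ∀ i j, B i j = B j i := by
    intro i j
    have h1 : star (Pm j i) = Pm i j := congrFun (congrFun hP.isHermitian i) j
    have h2 : (Pm j i).re = (Pm i j).re := by
      rw [← h1]; simp [Complex.star_def]
    simp [hB, h2]
  have hherm : B.IsHermitian := by
    ext i j
    simp [Matrix.conjTranspose_apply, hsym i j]
  have hBpos : B.PosSemidef := by
    refine Matrix.PosSemidef.of_dotProduct_mulVec_nonneg hherm (fun x => ?_)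
    have := re_quad_nonneg hP x
    simpa [dotProduct, Matrix.mulVec, hB] using this
  have h1Bquad : ∀ x : Fin N → ℝ,
      0 ≤ ∑ i, x i * ∑ j, ((1:Matrix (Fin N) (Fin N) ℝ) - B) i j * x j := by
    intro x
    have hre := re_quad_nonneg hP1 x
    have hentry : ∀ i j, (((1:Matrix (Fin N) (Fin N) ℂ) - Pm) i j).re
        = ((1:Matrix (Fin N) (Fin N) ℝ) - B) i j := by
      intro i j
      by_cases hij : i = j <;>
        simp [Matrix.sub_apply, Matrix.one_apply, hij, hB]
    calc (0:ℝ) ≤ ∑ i, x i * ∑ j, (((1:Matrix (Fin N) (Fin N) ℂ) - Pm) i j).re * x j := hre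
      _ = ∑ i, x i * ∑ j, ((1:Matrix (Fin N) (Fin N) ℝ) - B) i j * x j := by
          refine Finset.sum_congr rfl fun i _ => ?_
          congr 1
          exact Finset.sum_congr rfl fun j _ => by rw [hentry]
  have h1Bpos : ((1:Matrix (Fin N) (Fin N) ℝ) - B).PosSemidef := by
    refine Matrix.PosSemidef.of_dotProduct_mulVec_nonneg ((Matrix.isHermitian_one).sub hherm) (fun x => ?_)
    have := h1Bquad x
    simpa [dotProduct, Matrix.mulVec] using this
  have hBBpos : (B - B * B).PosSemidef := by
    obtain ⟨S, hS1, hS2⟩ : ∃ S : Matrix (Fin N) (Fin N) ℝ, Sᴴ = S ∧ S * S = B :=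
      ⟨CFC.sqrt B, (CFC.sqrt_nonneg B).posSemidef.1, CFC.sqrt_mul_sqrt_self B hBpos.nonneg⟩
    have h1 := h1Bpos.conjTranspose_mul_mul_same S
    rw [hS1] at h1
    have hkey : S * ((1:Matrix (Fin N) (Fin N) ℝ) - B) * S = B - B * B := by
      rw [← hS2]; noncomm_ring
    rwa [hkey] at h1
  have hquadBB := quad_nonneg hBBpos z
  have hquad1B := h1Bquad z
  have hsq : ∑ i, z i * ∑ j, (B * B) i j * z j = ∑ k, (∑ j, B k j * z j)^2 := by
    have h1 : ∀ i, z i * ∑ j, (B * B) i j * z j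
        = ∑ k, (B k i * z i) * (∑ j, B k j * z j) := by
      intro i
      calc z i * ∑ j, (B * B) i j * z j
          = ∑ j, ∑ k, z i * (B i k * B k j * z j) := by
            rw [Finset.mul_sum]
            refine Finset.sum_congr rfl fun j _ => ?_
            rw [Matrix.mul_apply, Finset.sum_mul, Finset.mul_sum]
        _ = ∑ k, ∑ j, z i * (B i k * B k j * z j) := Finset.sum_comm
        _ = ∑ k, (B k i * z i) * (∑ j, B k j * z j) := by
            refine Finset.sum_congr rfl fun k _ => ?_
            rw [Finset.mul_sum]
            refine Finset.sum_congr rfl fun j _ => ?_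
            rw [hsym i k]
            ring
    rw [Finset.sum_congr rfl fun i _ => h1 i, Finset.sum_comm]
    refine Finset.sum_congr rfl fun k _ => ?_
    rw [← Finset.sum_mul, sq]
  have hexp1 : ∑ i, z i * ∑ j, (B - B*B) i j * z j
      = (∑ i, z i * ∑ j, B i j * z j) - ∑ i, z i * ∑ j, (B*B) i j * z j := by
    rw [← Finset.sum_sub_distrib]
    refine Finset.sum_congr rfl fun i _ => ?_
    rw [← mul_sub, ← Finset.sum_sub_distrib]
    congr 1
    refine Finset.sum_congr rfl fun j _ => ?_
    rw [Matrix.sub_apply]; ring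
  have hexp2 : ∑ i, z i * ∑ j, ((1:Matrix (Fin N) (Fin N) ℝ) - B) i j * z j
      = (∑ j, (z j)^2) - ∑ i, z i * ∑ j, B i j * z j := by
    rw [← Finset.sum_sub_distrib]
    refine Finset.sum_congr rfl fun i _ => ?_
    have hone : ∑ j, ((1:Matrix (Fin N) (Fin N) ℝ)) i j * z j = z i := by
      simp [Matrix.one_apply]
    have hin : ∑ j, ((1:Matrix (Fin N) (Fin N) ℝ) - B) i j * z j
        = z i - ∑ j, B i j * z j := by
      rw [← hone, ← Finset.sum_sub_distrib]
      refine Finset.sum_congr rfl fun j _ => ?_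
      rw [Matrix.sub_apply]; ring
    rw [hin]; ring
  have hBentry : ∀ i j, B i j = (Pm i j).re := fun _ _ => rfl
  have hfinal1 : ∑ i, (∑ j, (Pm i j).re * z j)^2 = ∑ k, (∑ j, B k j * z j)^2 := rfl
  rw [hfinal1]
  rw [hexp1] at hquadBB
  rw [hexp2] at hquad1B
  rw [hsq] at hquadBB
  linarith

end RSQC

open RSQC

/-- **Concentration of quadratic forms over random signs** (core of the existence of
pseudorandom pure states). There is a constant `c > 0` such that for every `N×N` BPOVM `Π`
and every `ε > 0`, a uniformly random sign vector `α ∈ {−1,1}^N` (encoded by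
`b : Fin N → Bool`, with `α_i = ±1`) satisfies
`Pr[ |(1/N)·Re(Σ_{i,j} α_i α_j Π_{i,j}) − (1/N)·Re tr Π| ≥ ε ] ≤ 2·exp(−c·ε²·N)`. -/
theorem random_sign_quadratic_concentration :
    ∃ c : ℝ, 0 < c ∧
      ∀ N : ℕ, 1 ≤ N →
      ∀ Pm : Matrix (Fin N) (Fin N) ℂ,
        Pm.PosSemidef → ((1 : Matrix (Fin N) (Fin N) ℂ) - Pm).PosSemidef →
      ∀ ε : ℝ, 0 < ε →
        ((Finset.univ.filter (fun b : Fin N → Bool =>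
            ε ≤ |(N : ℝ)⁻¹ *
                  (∑ i, ∑ j, (if b i then (1 : ℂ) else -1) * (if b j then (1 : ℂ) else -1) *
                    Pm i j).re -
                (N : ℝ)⁻¹ * (Pm.trace).re|)).card : ℝ) / 2 ^ N ≤
          2 * Real.exp (-c * ε ^ 2 * N) := by
  classical
  refine ⟨1/32, by norm_num, ?_⟩
  intro N hN Pm hP hP1 ε hε
  set a : Fin N → Fin N → ℝ := fun i j => (Pm i j).re with ha
  have hNpos : (0:ℝ) < N := by
    have : (1:ℝ) ≤ N := by exact_mod_cast hN
    linarith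
  have hop : ∀ z : Fin N → ℝ, ∑ i, (∑ j, a i j * z j)^2 ≤ ∑ j, (z j)^2 :=
    fun z => hop_of_bpovm Pm hP hP1 z
  have hopneg : ∀ z : Fin N → ℝ, ∑ i, (∑ j, (-(a i j)) * z j)^2 ≤ ∑ j, (z j)^2 := by
    intro z
    have h1 : ∀ i, (∑ j, (-(a i j)) * z j)^2 = (∑ j, a i j * z j)^2 := by
      intro i
      have hneg : ∑ j, (-(a i j)) * z j = -(∑ j, a i j * z j) := by
        rw [← Finset.sum_neg_distrib]
        exact Finset.sum_congr rfl fun j _ => by ring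
      rw [hneg, neg_sq]
    rw [Finset.sum_congr rfl fun i _ => h1 i]
    exact hop z
  have hre : ∀ b : Fin N → Bool,
      (∑ i, ∑ j, (if b i then (1:ℂ) else -1) * (if b j then (1:ℂ) else -1) * Pm i j).re
      = ∑ i, ∑ j, sgn b i * sgn b j * a i j := by
    intro b
    rw [Complex.re_sum]
    refine Finset.sum_congr rfl fun i _ => ?_
    rw [Complex.re_sum]
    refine Finset.sum_congr rfl fun j _ => ?_
    by_cases hbi : b i <;> by_cases hbj : b j <;> simp [sgn, hbi, hbj, ha]
  have htr : (Pm.trace).re = ∑ i, a i i := by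
    simp [Matrix.trace, Matrix.diag, Complex.re_sum, ha]
  have hevent : ∀ b : Fin N → Bool,
      (ε ≤ |(N : ℝ)⁻¹ *
          (∑ i, ∑ j, (if b i then (1 : ℂ) else -1) * (if b j then (1 : ℂ) else -1) *
            Pm i j).re - (N : ℝ)⁻¹ * (Pm.trace).re|)
      ↔ (ε * N ≤ Qc a b ∨ ε * N ≤ -(Qc a b)) := by
    intro b
    rw [hre b, htr]
    have hfac : (N:ℝ)⁻¹ * (∑ i, ∑ j, sgn b i * sgn b j * a i j) - (N:ℝ)⁻¹ * (∑ i, a i i)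
        = (N:ℝ)⁻¹ * Qc a b := by unfold Qc; ring
    rw [hfac, abs_mul, abs_of_nonneg (by positivity : (0:ℝ) ≤ (N:ℝ)⁻¹),
      inv_mul_eq_div, le_div_iff₀ hNpos, le_abs]
  have hbound : ∀ (f : (Fin N → Bool) → ℝ),
      (∑ b : Fin N → Bool, Real.exp ((ε/16) * f b) ≤ 2^N * Real.exp (8 * (ε/16)^2 * N)) →
      ((Finset.univ.filter fun b : Fin N → Bool => ε*N ≤ f b).card : ℝ)
        ≤ 2^N * Real.exp (-(1/32) * ε^2 * N) := by
    intro f hmgf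
    have hch := chernoff f (ε/16) (ε*N) (by positivity)
    calc ((Finset.univ.filter fun b : Fin N → Bool => ε*N ≤ f b).card : ℝ)
        ≤ Real.exp (-((ε/16)*(ε*N))) * ∑ b : Fin N → Bool, Real.exp ((ε/16) * f b) := hch
      _ ≤ Real.exp (-((ε/16)*(ε*N))) * (2^N * Real.exp (8*(ε/16)^2*N)) :=
          mul_le_mul_of_nonneg_left hmgf (Real.exp_pos _).le
      _ = 2^N * Real.exp (-(1/32) * ε^2 * N) := by
          rw [mul_left_comm, ← Real.exp_add]
          congr 1
          ring
  have h1 : ((Finset.univ.filter fun b : Fin N → Bool => ε*N ≤ Qc a b).card : ℝ)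
      ≤ 2^N * Real.exp (-(1/32) * ε^2 * N) :=
    hbound (Qc a) (mgf_le a (ε/16) hop)
  have hQneg : ∀ b, Qc (fun i j => -(a i j)) b = -(Qc a b) := by
    intro b
    unfold Qc
    have hx1 : ∑ i, ∑ j, sgn b i * sgn b j * (-(a i j))
        = -∑ i, ∑ j, sgn b i * sgn b j * a i j := by
      rw [← Finset.sum_neg_distrib]
      refine Finset.sum_congr rfl fun i _ => ?_
      rw [← Finset.sum_neg_distrib]
      exact Finset.sum_congr rfl fun j _ => by ring
    have hx2 : ∑ i, -(a i i) = -∑ i, a i i := by rw [← Finset.sum_neg_distrib]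
    rw [hx1, hx2]
    ring
  have h2 : ((Finset.univ.filter fun b : Fin N → Bool => ε*N ≤ -(Qc a b)).card : ℝ)
      ≤ 2^N * Real.exp (-(1/32) * ε^2 * N) := by
    refine hbound (fun b => -(Qc a b)) ?_
    have := mgf_le (fun i j => -(a i j)) (ε/16) hopneg
    calc ∑ b : Fin N → Bool, Real.exp ((ε/16) * -(Qc a b))
        = ∑ b : Fin N → Bool, Real.exp ((ε/16) * Qc (fun i j => -(a i j)) b) :=
          Finset.sum_congr rfl fun b _ => by rw [hQneg]
      _ ≤ 2^N * Real.exp (8 * (ε/16)^2 * N) := this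
  have hsub : (Finset.univ.filter (fun b : Fin N → Bool =>
      ε ≤ |(N : ℝ)⁻¹ *
            (∑ i, ∑ j, (if b i then (1 : ℂ) else -1) * (if b j then (1 : ℂ) else -1) *
              Pm i j).re - (N : ℝ)⁻¹ * (Pm.trace).re|))
      ⊆ (Finset.univ.filter fun b : Fin N → Bool => ε*N ≤ Qc a b)
        ∪ (Finset.univ.filter fun b : Fin N → Bool => ε*N ≤ -(Qc a b)) := by
    intro b hb
    rw [Finset.mem_filter] at hb
    rcases (hevent b).mp hb.2 with h | h
    · exact Finset.mem_union_left _ (Finset.mem_filter.mpr ⟨Finset.mem_univ _, h⟩)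
    · exact Finset.mem_union_right _ (Finset.mem_filter.mpr ⟨Finset.mem_univ _, h⟩)
  have hcard : ((Finset.univ.filter (fun b : Fin N → Bool =>
      ε ≤ |(N : ℝ)⁻¹ *
            (∑ i, ∑ j, (if b i then (1 : ℂ) else -1) * (if b j then (1 : ℂ) else -1) *
              Pm i j).re - (N : ℝ)⁻¹ * (Pm.trace).re|)).card : ℝ)
      ≤ 2 * (2^N * Real.exp (-(1/32) * ε^2 * N)) := by
    have hc1 := Finset.card_le_card hsub
    have hc2 := Finset.card_union_le
      (Finset.univ.filter fun b : Fin N → Bool => ε*N ≤ Qc a b)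
      (Finset.univ.filter fun b : Fin N → Bool => ε*N ≤ -(Qc a b))
    have : ((Finset.univ.filter (fun b : Fin N → Bool =>
        ε ≤ |(N : ℝ)⁻¹ *
              (∑ i, ∑ j, (if b i then (1 : ℂ) else -1) * (if b j then (1 : ℂ) else -1) *
                Pm i j).re - (N : ℝ)⁻¹ * (Pm.trace).re|)).card : ℝ)
        ≤ ((Finset.univ.filter fun b : Fin N → Bool => ε*N ≤ Qc a b).card : ℝ)
          + ((Finset.univ.filter fun b : Fin N → Bool => ε*N ≤ -(Qc a b)).card : ℝ) := by
      exact_mod_cast le_trans hc1 hc2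
    linarith
  have h2Npos : (0:ℝ) < 2^N := by positivity
  rw [div_le_iff₀ h2Npos]
  calc ((Finset.univ.filter (fun b : Fin N → Bool =>
      ε ≤ |(N : ℝ)⁻¹ *
            (∑ i, ∑ j, (if b i then (1 : ℂ) else -1) * (if b j then (1 : ℂ) else -1) *
              Pm i j).re - (N : ℝ)⁻¹ * (Pm.trace).re|)).card : ℝ)
      ≤ 2 * (2^N * Real.exp (-(1/32) * ε^2 * N)) := hcard
    _ = 2 * Real.exp (-(1/32) * ε^2 * N) * 2^N := by ring
end

section
/- Conditional quantum min-entropy matches classical average min-entropy for classical states: Let N, M ≥ 1 and let p : Fin N × Fin M → ℝ be nonnegative with Σ_{x,b} p(x,b) = 1. Let ρ = Matrix.diagonal (fun (x,b) => (p(x,b) : ℂ)) be the corresponding density matrix on ℂ^{N·M} indexed by Fin N × Fin M. Then sInf { c : ℝ | 0 < c ∧ ∃ density matrix σ on ℂ^M, ρ ≤ c • ((N:ℝ)⁻¹ • (I_N ⊗ σ)) in the Loewner order } = N · Σ_{b : Fin M} (max_{x : Fin N} p(x,b)). (Equivalently, H_min(X|B)_ρ as defined by log N minus the infimum of D_∞(ρ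 ‖ (1/N)·I_N ⊗ σ) over densities σ equals −log₂ Σ_b max_x p(x,b), the classical average min-entropy of DORS.) -/
open Matrix
open scoped ComplexOrder Kronecker

/-- **Conditional quantum min-entropy matches classical average min-entropy for classical
states.** For a joint probability vector `p` on `Fin N × Fin M` with associated diagonal
density matrix `ρ`, the quantity `2^{log N − H_min(X|B)_ρ}`, i.e. the infimum of those
`c > 0` for which some density `σ` on the `B` system satisfies
`ρ ≤ c • ((1/N)·I_N ⊗ σ)`, equals `N · Σ_b max_x p(x,b)`; equivalently `H_min(X|B)_ρ`
equals the classical average min-entropy `−log₂ Σ_b max_x p(x,b)`. -/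
theorem conditional_min_entropy_classical (N M : ℕ) (hN : 1 ≤ N) (hM : 1 ≤ M)
    (p : Fin N × Fin M → ℝ) (hpnn : ∀ x, 0 ≤ p x) (hpsum : ∑ x, p x = 1) :
    sInf {c : ℝ | 0 < c ∧
        ∃ σ : Matrix (Fin M) (Fin M) ℂ, σ.PosSemidef ∧ σ.trace = 1 ∧
          (c • ((N : ℝ)⁻¹ • ((1 : Matrix (Fin N) (Fin N) ℂ) ⊗ₖ σ)) -
            Matrix.diagonal (fun x : Fin N × Fin M => (p x : ℂ))).PosSemidef} =
      N * ∑ b : Fin M, ⨆ x : Fin N, p (x, b) := by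
  have hNpos : (0:ℝ) < N := by exact_mod_cast hN
  haveI : Nonempty (Fin N) := ⟨⟨0, hN⟩⟩
  haveI : Nonempty (Fin M) := ⟨⟨0, hM⟩⟩
  set m : Fin M → ℝ := fun b => ⨆ x : Fin N, p (x, b) with hm
  have hmle : ∀ x b, p (x, b) ≤ m b := fun x b =>
    le_ciSup (f := fun x => p (x, b)) (Set.Finite.bddAbove (Set.finite_range _)) x
  have hmnn : ∀ b, 0 ≤ m b := fun b =>
    le_trans (hpnn _) (hmle (Classical.arbitrary _) b)
  set S : ℝ := ∑ b, m b with hSdef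
  have hS : 0 < S := by
    rcases (Finset.sum_nonneg (fun b _ => hmnn b)).lt_or_eq with h | h
    · exact h
    · exfalso
      have h0 : ∀ b ∈ Finset.univ, m b = 0 :=
        (Finset.sum_eq_zero_iff_of_nonneg (fun b _ => hmnn b)).1 h.symm
      have : ∑ x, p x = 0 := Finset.sum_eq_zero fun x _ =>
        le_antisymm ((hmle x.1 x.2).trans (h0 x.2 (Finset.mem_univ _)).le) (hpnn x)
      rw [hpsum] at this; linarith
  -- a general computation of the matrix in question when σ is diagonal
  have key : ∀ (c : ℝ) (σd : Fin M → ℝ),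
      c • ((N:ℝ)⁻¹ • ((1 : Matrix (Fin N) (Fin N) ℂ) ⊗ₖ
          Matrix.diagonal (fun b => (σd b : ℂ)))) -
        Matrix.diagonal (fun x : Fin N × Fin M => (p x : ℂ))
      = Matrix.diagonal
          (fun x : Fin N × Fin M => ((c * (N:ℝ)⁻¹ * σd x.2 - p x : ℝ) : ℂ)) := by
    intro c σd
    rw [← Matrix.diagonal_one, Matrix.diagonal_kronecker_diagonal,
      ← Matrix.diagonal_smul, ← Matrix.diagonal_smul, Matrix.diagonal_sub]
    congr 1
    funext x
    simp only [Pi.smul_apply, Pi.one_apply, one_mul, Complex.real_smul, Pi.sub_apply]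
    push_cast
    ring
  -- membership of N * S in the set
  have hmem : (N * S) ∈ {c : ℝ | 0 < c ∧
      ∃ σ : Matrix (Fin M) (Fin M) ℂ, σ.PosSemidef ∧ σ.trace = 1 ∧
        (c • ((N : ℝ)⁻¹ • ((1 : Matrix (Fin N) (Fin N) ℂ) ⊗ₖ σ)) -
          Matrix.diagonal (fun x : Fin N × Fin M => (p x : ℂ))).PosSemidef} := by
    refine ⟨by positivity, Matrix.diagonal (fun b => ((m b / S : ℝ) : ℂ)), ?_, ?_, ?_⟩
    · exact Matrix.posSemidef_diagonal_iff.mpr fun b =>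
        Complex.zero_le_real.mpr (div_nonneg (hmnn b) hS.le)
    · rw [Matrix.trace_diagonal, ← Complex.ofReal_sum, ← Finset.sum_div,
        ← hSdef, div_self hS.ne']
      simp
    · rw [key]
      refine Matrix.posSemidef_diagonal_iff.mpr fun x => Complex.zero_le_real.mpr ?_
      have : (N:ℝ) * S * (N:ℝ)⁻¹ * (m x.2 / S) = m x.2 := by
        field_simp
      rw [this]
      exact sub_nonneg.mpr (hmle x.1 x.2)
  refine le_antisymm (csInf_le ⟨0, fun c hc => hc.1.le⟩ hmem) (le_csInf ⟨_, hmem⟩ ?_)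
  rintro c ⟨hc, σ, hσ, htr, hPSD⟩
  -- diagonal entries of the PSD difference are nonnegative
  have hdiag : ∀ x : Fin N, ∀ b : Fin M,
      p (x, b) ≤ c * (N:ℝ)⁻¹ * (σ b b).re := by
    intro x b
    have h0 : (0:ℂ) ≤ (c • ((N : ℝ)⁻¹ • ((1 : Matrix (Fin N) (Fin N) ℂ) ⊗ₖ σ)) -
        Matrix.diagonal (fun x : Fin N × Fin M => (p x : ℂ))) (x, b) (x, b) := by
      exact hPSD.diag_nonneg
    have hentry : (c • ((N : ℝ)⁻¹ • ((1 : Matrix (Fin N) (Fin N) ℂ) ⊗ₖ σ)) -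
        Matrix.diagonal (fun x : Fin N × Fin M => (p x : ℂ))) (x, b) (x, b)
        = (c * (N:ℝ)⁻¹ : ℝ) • σ b b - (p (x, b) : ℂ) := by
      simp [Matrix.sub_apply, Matrix.smul_apply, Matrix.kroneckerMap_apply,
        Matrix.one_apply_eq, Matrix.diagonal_apply_eq, smul_smul]
    rw [hentry] at h0
    have := (Complex.le_def.mp h0).1
    simpa [Complex.real_smul] using this
  have hsup : ∀ b, m b ≤ c * (N:ℝ)⁻¹ * (σ b b).re := fun b =>
    ciSup_le fun x => hdiag x b
  have htrre : ∑ b, (σ b b).re = 1 := by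
    have : (σ.trace).re = 1 := by rw [htr]; simp
    rw [Matrix.trace] at this
    simpa [Complex.re_sum] using this
  have hsum : S ≤ c * (N:ℝ)⁻¹ := by
    calc S ≤ ∑ b, c * (N:ℝ)⁻¹ * (σ b b).re :=
          Finset.sum_le_sum fun b _ => hsup b
      _ = c * (N:ℝ)⁻¹ * ∑ b, (σ b b).re := by rw [Finset.mul_sum]
      _ = c * (N:ℝ)⁻¹ := by rw [htrre, mul_one]
  calc (N:ℝ) * S ≤ (N:ℝ) * (c * (N:ℝ)⁻¹) :=
        mul_le_mul_of_nonneg_left hsum hNpos.le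
    _ = c := by field_simp
end

section
/- Derandomization via sampling for matrix-valued function ensembles: There is a universal constant C > 0 such that the following holds. Let X be a finite nonempty type with |X| = d_X ≥ 2, let d ≥ 2, let ι be a finite nonempty type, let w : ι → ℝ be nonnegative weights with Σ_k w_k = 1, let F : ι → X → (density matrices on ℂ^d), and let ε ∈ (0, 1/2). Then there exist a natural number t with 1 ≤ t ≤ ⌈C · (Real.log d_X + d² · Real.log (1/ε)) / ε²⌉ and indices i : Fin t → ι such that for every x ∈ X and every d×d complex matrix Π with Π and I − Π positive semidefinite: |Re tr(Π · (Σ_k w_k • F_k(x) − (1/t) • Σ_{j : Fin t} F_{i(j)}(x)))| ≤ ε. -/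
open Matrix
open scoped ComplexOrder

open Metric MeasureTheory
open scoped ENNReal Matrix.Norms.L2Operator InnerProductSpace MatrixOrder

set_option linter.unusedSectionVars false
set_option maxHeartbeats 1000000

/-! ### Auxiliary lemma: second order bound on the exponential -/

lemma aux_exp_le_one_add_add_sq {x : ℝ} (hx : |x| ≤ 1) : Real.exp x ≤ 1 + x + x ^ 2 := by
  have h := Real.exp_bound hx (n := 2) (by norm_num)
  have h2 : ∑ m ∈ Finset.range 2, x ^ m / m.factorial = 1 + x := by
    simp [Finset.sum_range_succ]
  rw [h2] at h
  norm_num [Nat.factorial] at h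
  have h4 := (abs_le.mp h).2
  have h5 : |x| ^ 2 = x ^ 2 := sq_abs x
  nlinarith [sq_nonneg x]

/-! ### Auxiliary lemma: a scalar Chernoff-type tail bound for finite iid sampling -/

lemma aux_chernoff_tail {ι : Type*} [Fintype ι] (w : ι → ℝ) (hw : ∀ k, 0 ≤ w k)
    (hw1 : ∑ k, w k = 1) (h : ι → ℝ) (hmean : ∑ k, w k * h k = 0)
    (hbdd : ∀ k, |h k| ≤ 2) (t : ℕ) {ε : ℝ} (hε : 0 < ε) (hε2 : ε ≤ 1) :
    ∑ f ∈ Finset.univ.filter (fun f : Fin t → ι => (t:ℝ) * (ε/2) ≤ ∑ j, h (f j)),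
      (∏ j, w (f j)) ≤ Real.exp (-(t:ℝ) * ε^2 / 64) := by
  classical
  set lam : ℝ := ε / 16 with hlam
  have hlam0 : 0 < lam := by positivity
  have hS : ∑ k, w k * Real.exp (lam * h k) ≤ Real.exp (4 * lam ^ 2) := by
    have hstep : ∀ k, w k * Real.exp (lam * h k)
        ≤ w k * (1 + lam * h k + (lam * h k) ^ 2) := by
      intro k
      refine mul_le_mul_of_nonneg_left ?_ (hw k)
      apply aux_exp_le_one_add_add_sq
      rw [abs_mul, abs_of_pos hlam0]
      calc lam * |h k| ≤ lam * 2 := by nlinarith [hbdd k]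
        _ ≤ 1 := by rw [hlam]; nlinarith
    calc ∑ k, w k * Real.exp (lam * h k)
        ≤ ∑ k, w k * (1 + lam * h k + (lam * h k) ^ 2) :=
          Finset.sum_le_sum (fun k _ => hstep k)
      _ = 1 + lam * (∑ k, w k * h k) + lam ^ 2 * ∑ k, w k * h k ^ 2 := by
          simp only [mul_add, mul_one, Finset.sum_add_distrib, Finset.mul_sum]
          rw [hw1]
          congr 1
          · congr 1
            apply Finset.sum_congr rfl; intro k _; ring
          · apply Finset.sum_congr rfl; intro k _; ring
      _ ≤ 1 + 4 * lam ^ 2 := by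
          rw [hmean]
          have : ∑ k, w k * h k ^ 2 ≤ ∑ k, w k * 4 := by
            apply Finset.sum_le_sum
            intro k _
            have h4 : h k ^ 2 ≤ 4 := by nlinarith [abs_le.mp (hbdd k)]
            nlinarith [hw k]
          rw [← Finset.sum_mul, hw1] at this
          nlinarith [sq_nonneg lam]
      _ ≤ Real.exp (4 * lam ^ 2) := by
          have := Real.add_one_le_exp (4 * lam ^ 2)
          linarith
  have hterm : ∀ f ∈ Finset.univ.filter (fun f : Fin t → ι => (t:ℝ) * (ε/2) ≤ ∑ j, h (f j)),
      (∏ j, w (f j))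
      ≤ Real.exp (-(lam * t * (ε/2))) * ∏ j, w (f j) * Real.exp (lam * h (f j)) := by
    intro f hf
    rw [Finset.mem_filter] at hf
    have hf2 := hf.2
    have hWnn : (0:ℝ) ≤ ∏ j, w (f j) := Finset.prod_nonneg (fun j _ => hw (f j))
    have hexp : ∏ j, w (f j) * Real.exp (lam * h (f j))
        = (∏ j, w (f j)) * Real.exp (lam * ∑ j, h (f j)) := by
      rw [Finset.prod_mul_distrib, ← Real.exp_sum]
      congr 2
      rw [Finset.mul_sum]
    rw [hexp, ← mul_assoc, mul_comm (Real.exp _) (∏ j, w (f j)), mul_assoc, ← Real.exp_add]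
    nth_rewrite 1 [← mul_one (∏ j, w (f j))]
    refine mul_le_mul_of_nonneg_left ?_ hWnn
    rw [← Real.exp_zero]
    apply Real.exp_le_exp.mpr
    nlinarith [hf2, hlam0]
  have key : ∑ f ∈ Finset.univ.filter (fun f : Fin t → ι => (t:ℝ) * (ε/2) ≤ ∑ j, h (f j)),
      (∏ j, w (f j))
      ≤ Real.exp (-(lam * t * (ε/2))) * ∑ f : Fin t → ι, ∏ j, w (f j) * Real.exp (lam * h (f j)) := by
    calc ∑ f ∈ Finset.univ.filter (fun f : Fin t → ι => (t:ℝ) * (ε/2) ≤ ∑ j, h (f j)),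
        (∏ j, w (f j))
        ≤ ∑ f ∈ Finset.univ.filter (fun f : Fin t → ι => (t:ℝ) * (ε/2) ≤ ∑ j, h (f j)),
          Real.exp (-(lam * t * (ε/2))) * ∏ j, w (f j) * Real.exp (lam * h (f j)) :=
          Finset.sum_le_sum hterm
      _ ≤ ∑ f : Fin t → ι,
          Real.exp (-(lam * t * (ε/2))) * ∏ j, w (f j) * Real.exp (lam * h (f j)) := by
          apply Finset.sum_le_sum_of_subset_of_nonneg (Finset.filter_subset _ _)
          intro f _ _
          exact mul_nonneg (Real.exp_nonneg _)
            (Finset.prod_nonneg (fun j _ => mul_nonneg (hw _) (Real.exp_nonneg _)))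
      _ = Real.exp (-(lam * t * (ε/2))) * ∑ f : Fin t → ι, ∏ j, w (f j) * Real.exp (lam * h (f j)) := by
          rw [Finset.mul_sum]
  have hprod : ∑ f : Fin t → ι, ∏ j, w (f j) * Real.exp (lam * h (f j))
      = (∑ k, w k * Real.exp (lam * h k)) ^ t := by
    have h1 := Finset.prod_univ_sum (fun _ : Fin t => (Finset.univ : Finset ι))
      (fun _ k => w k * Real.exp (lam * h k))
    rw [Fintype.piFinset_univ] at h1
    rw [← h1, Finset.prod_const, Finset.card_univ, Fintype.card_fin]
  have hSnn : (0:ℝ) ≤ ∑ k, w k * Real.exp (lam * h k) :=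
    Finset.sum_nonneg (fun k _ => mul_nonneg (hw k) (Real.exp_nonneg _))
  calc ∑ f ∈ Finset.univ.filter (fun f : Fin t → ι => (t:ℝ) * (ε/2) ≤ ∑ j, h (f j)),
      (∏ j, w (f j))
      ≤ Real.exp (-(lam * t * (ε/2))) * (∑ k, w k * Real.exp (lam * h k)) ^ t := by
        rw [← hprod]; exact key
    _ ≤ Real.exp (-(lam * t * (ε/2))) * Real.exp (4 * lam ^ 2) ^ t := by
        apply mul_le_mul_of_nonneg_left _ (Real.exp_nonneg _)
        exact pow_le_pow_left₀ hSnn hS t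
    _ = Real.exp (-(lam * t * (ε/2)) + 4 * lam ^ 2 * t) := by
        rw [← Real.exp_nat_mul, ← Real.exp_add]
        ring_nf
    _ = Real.exp (-(t:ℝ) * ε^2 / 64) := by
        congr 1
        rw [hlam]
        ring

/-! ### Auxiliary lemma: cardinality bound for separated sets (volume argument) -/

lemma aux_sep_card_le (E : Type*) [NormedAddCommGroup E] [NormedSpace ℝ E]
    [FiniteDimensional ℝ E] [Nontrivial E] {δ : ℝ} (hδ : 0 < δ)
    (s : Finset E) (h1 : ∀ x ∈ s, ‖x‖ ≤ 1)
    (h2 : ∀ x ∈ s, ∀ y ∈ s, x ≠ y → δ < ‖x - y‖) :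
    (s.card : ℝ) ≤ (1 + 2/δ) ^ (Module.finrank ℝ E) := by
  borelize E
  set n := Module.finrank ℝ E with hn
  set μ : Measure E := (Module.finBasis ℝ E).addHaar with hμ
  have hb : 0 < μ (ball 0 1) := measure_ball_pos μ 0 one_pos
  have hb' : μ (ball 0 1) < ⊤ := measure_ball_lt_top
  have hdisj : (s : Set E).PairwiseDisjoint (fun x => ball x (δ/2)) := by
    intro x hx y hy hxy
    apply Metric.ball_disjoint_ball
    rw [dist_eq_norm]
    linarith [h2 x hx y hy hxy]
  have hsub : (⋃ x ∈ s, ball x (δ/2)) ⊆ ball 0 (1 + δ/2) := by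
    intro z hz
    simp only [Set.mem_iUnion] at hz
    obtain ⟨x, hx, hzx⟩ := hz
    rw [mem_ball, dist_eq_norm] at hzx ⊢
    have h := norm_add_le (z - x) x
    have hx1 := h1 x hx
    have he : z - 0 = (z - x) + x := by abel
    rw [he]
    linarith
  have hballs : ∀ x : E, μ (ball x (δ/2)) = ENNReal.ofReal ((δ/2) ^ n) * μ (ball 0 1) :=
    fun x => Measure.addHaar_ball μ x (by linarith)
  have key : ((s.card : ℝ≥0∞) * ENNReal.ofReal ((δ/2) ^ n)) * μ (ball 0 1)
      ≤ ENNReal.ofReal ((1 + δ/2) ^ n) * μ (ball 0 1) := by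
    calc ((s.card : ℝ≥0∞) * ENNReal.ofReal ((δ/2) ^ n)) * μ (ball 0 1)
        = ∑ x ∈ s, μ (ball x (δ/2)) := by
          rw [Finset.sum_congr rfl (fun x _ => hballs x), Finset.sum_const, nsmul_eq_mul,
            mul_assoc]
      _ = μ (⋃ x ∈ s, ball x (δ/2)) :=
          (measure_biUnion_finset hdisj (fun x _ => measurableSet_ball)).symm
      _ ≤ μ (ball 0 (1 + δ/2)) := measure_mono hsub
      _ = ENNReal.ofReal ((1 + δ/2) ^ n) * μ (ball 0 1) :=
          Measure.addHaar_ball μ 0 (by linarith)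
  have key2 : (s.card : ℝ≥0∞) * ENNReal.ofReal ((δ/2) ^ n)
      ≤ ENNReal.ofReal ((1 + δ/2) ^ n) :=
    (ENNReal.mul_le_mul_iff_left hb.ne' hb'.ne).mp key
  have key3 : (s.card : ℝ) * (δ/2) ^ n ≤ (1 + δ/2) ^ n := by
    rw [← ENNReal.ofReal_natCast, ← ENNReal.ofReal_mul (by positivity)] at key2
    exact (ENNReal.ofReal_le_ofReal_iff (by positivity)).mp key2
  have hpow : (1 + 2/δ) ^ n = (1 + δ/2) ^ n / (δ/2) ^ n := by
    rw [← div_pow]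
    congr 1
    field_simp
    ring
  rw [hpow, le_div_iff₀ (by positivity)]
  exact key3

/-! ### Auxiliary lemma: existence of small nets in the unit ball -/

lemma aux_exists_net (E : Type*) [NormedAddCommGroup E] [NormedSpace ℝ E]
    [FiniteDimensional ℝ E] [Nontrivial E] {δ : ℝ} (hδ : 0 < δ) :
    ∃ T : Finset E, (T.card : ℝ) ≤ (1 + 2/δ) ^ (Module.finrank ℝ E) ∧
      (∀ A ∈ T, ‖A‖ ≤ 1) ∧ ∀ x : E, ‖x‖ ≤ 1 → ∃ y ∈ T, ‖x - y‖ ≤ δ := by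
  classical
  set n := Module.finrank ℝ E with hn
  set Good : Finset E → Prop := fun s =>
    (∀ x ∈ s, ‖x‖ ≤ 1) ∧ (∀ x ∈ s, ∀ y ∈ s, x ≠ y → δ < ‖x - y‖) with hGood
  set K : Set ℕ := {k | ∃ s : Finset E, Good s ∧ s.card = k} with hK
  have hK0 : 0 ∈ K := ⟨∅, ⟨by simp, by simp⟩, rfl⟩
  have hKbdd : BddAbove K := by
    refine ⟨⌈(1 + 2/δ) ^ n⌉₊, ?_⟩
    rintro k ⟨s, hs, rfl⟩
    exact_mod_cast le_trans (aux_sep_card_le E hδ s hs.1 hs.2) (Nat.le_ceil _)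
  obtain ⟨s, hs, hcard⟩ : ∃ s : Finset E, Good s ∧ s.card = sSup K :=
    Nat.sSup_mem ⟨0, hK0⟩ hKbdd
  refine ⟨s, aux_sep_card_le E hδ s hs.1 hs.2, ?_, ?_⟩
  · exact hs.1
  · intro x hx
    by_contra hbad
    push_neg at hbad
    have hxs : x ∉ s := fun hxs => by
      have := hbad x hxs; simp at this; linarith
    have hGood' : Good (insert x s) := by
      constructor
      · intro y hy
        rcases Finset.mem_insert.mp hy with rfl | hy
        · exact hx
        · exact hs.1 y hy
      · intro a ha b hb hab
        have hsep : ∀ c ∈ s, δ < ‖x - c‖ := fun c hc => hbad c hc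
        rcases Finset.mem_insert.mp ha with ha' | ha' <;>
          rcases Finset.mem_insert.mp hb with hb' | hb'
        · exact absurd (ha'.trans hb'.symm) hab
        · rw [ha']; exact hsep b hb'
        · rw [hb', ← norm_neg, neg_sub]; exact hsep a ha'
        · exact hs.2 a ha' b hb' hab
    have : s.card + 1 ∈ K := by
      refine ⟨insert x s, hGood', ?_⟩
      rw [Finset.card_insert_of_notMem hxs]
    have hle := le_csSup hKbdd this
    rw [← hcard] at hle
    omega

/-! ### Auxiliary lemmas on matrices with the L2 operator norm -/

noncomputable def aux_euc {d : ℕ} (v : Fin d → ℂ) : EuclideanSpace ℂ (Fin d) :=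
  (WithLp.equiv 2 _).symm v

lemma aux_inner_euc_CLM {d : ℕ} (M : Matrix (Fin d) (Fin d) ℂ) (v : Fin d → ℂ) :
    ⟪aux_euc v, Matrix.toEuclideanCLM (𝕜 := ℂ) M (aux_euc v)⟫_ℂ = star v ⬝ᵥ (M *ᵥ v) := by
  rw [aux_euc, WithLp.equiv_symm_apply, Matrix.toEuclideanCLM_toLp]
  simp only [PiLp.inner_apply, WithLp.ofLp_toLp, RCLike.inner_apply,
    Matrix.toLin'_apply, dotProduct, Pi.star_apply, RCLike.star_def]
  exact Finset.sum_congr rfl (fun _ _ => mul_comm _ _)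

lemma aux_inner_euc_self {d : ℕ} (v : Fin d → ℂ) : ⟪aux_euc v, aux_euc v⟫_ℂ = star v ⬝ᵥ v := by
  simp only [aux_euc, PiLp.inner_apply, WithLp.equiv_symm_apply, WithLp.ofLp_toLp, RCLike.inner_apply,
    dotProduct, Pi.star_apply, RCLike.star_def]
  exact Finset.sum_congr rfl (fun _ _ => mul_comm _ _)

/-- A BPOVM element has L2 operator norm at most one. -/
lemma aux_bpovm_norm_le_one {d : ℕ} {Pm : Matrix (Fin d) (Fin d) ℂ} (hP : Pm.PosSemidef)
    (hIP : ((1 : Matrix (Fin d) (Fin d) ℂ) - Pm).PosSemidef) : ‖Pm‖ ≤ 1 := by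
  set T := Matrix.toEuclideanCLM (𝕜 := ℂ) Pm with hT
  rw [Matrix.cstar_norm_def]
  refine ContinuousLinearMap.opNorm_le_bound _ zero_le_one ?_
  intro u
  rw [one_mul]
  set S := CFC.sqrt Pm with hSdef
  have hSh : S.IsHermitian := (Matrix.nonneg_iff_posSemidef.mp (CFC.sqrt_nonneg Pm)).1
  have hSS : S * S = Pm := CFC.sqrt_mul_sqrt_self Pm hP.nonneg
  have hpsd : (Pm - Pm * Pm).PosSemidef := by
    have h1 := hIP.mul_mul_conjTranspose_same S
    have h2 : S * (1 - Pm) * Sᴴ = Pm - Pm * Pm := by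
      rw [hSh.eq, ← hSS]
      noncomm_ring
    rwa [h2] at h1
  have key : ‖T u‖ ^ 2 ≤ ‖u‖ * ‖T u‖ := by
    have e1 : (‖T u‖ : ℝ) ^ 2 = RCLike.re ⟪T u, T u⟫_ℂ := by
      rw [inner_self_eq_norm_sq (𝕜 := ℂ)]
    have hadj : ⟪T u, T u⟫_ℂ = ⟪u, (Matrix.toEuclideanCLM (𝕜 := ℂ) (Pm * Pm)) u⟫_ℂ := by
      have hstar : star T = T := by
        rw [hT, ← map_star, Matrix.star_eq_conjTranspose, hP.1.eq]
      calc ⟪T u, T u⟫_ℂ = ⟪u, ContinuousLinearMap.adjoint T (T u)⟫_ℂ := by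
            rw [ContinuousLinearMap.adjoint_inner_right]
        _ = ⟪u, T (T u)⟫_ℂ := by rw [← ContinuousLinearMap.star_eq_adjoint, hstar]
        _ = ⟪u, (Matrix.toEuclideanCLM (𝕜 := ℂ) (Pm * Pm)) u⟫_ℂ := by
            rw [_root_.map_mul]; rfl
    obtain ⟨v, hv⟩ : ∃ v : Fin d → ℂ, u = aux_euc v := ⟨WithLp.equiv 2 _ u, rfl⟩
    have hpos : RCLike.re ⟪u, (Matrix.toEuclideanCLM (𝕜 := ℂ) (Pm - Pm * Pm)) u⟫_ℂ ≥ 0 := by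
      rw [hv, aux_inner_euc_CLM]
      exact hpsd.re_dotProduct_nonneg v
    have hsub : RCLike.re ⟪u, (Matrix.toEuclideanCLM (𝕜 := ℂ) (Pm * Pm)) u⟫_ℂ
        ≤ RCLike.re ⟪u, T u⟫_ℂ := by
      have hdiff : (Matrix.toEuclideanCLM (𝕜 := ℂ) (Pm - Pm * Pm)) u
          = T u - (Matrix.toEuclideanCLM (𝕜 := ℂ) (Pm * Pm)) u := by
        rw [map_sub]; rfl
      rw [hdiff, inner_sub_right] at hpos
      simp only [map_sub] at hpos
      linarith
    have hCS : RCLike.re ⟪u, T u⟫_ℂ ≤ ‖u‖ * ‖T u‖ := by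
      calc RCLike.re ⟪u, T u⟫_ℂ ≤ ‖⟪u, T u⟫_ℂ‖ := RCLike.re_le_norm _
        _ ≤ ‖u‖ * ‖T u‖ := norm_inner_le_norm _ _
    rw [e1, hadj]
    linarith
  rcases eq_or_lt_of_le (norm_nonneg (T u)) with h0 | h0
  · rw [← h0]; exact norm_nonneg u
  · nlinarith [key]

/-- Trace against a density matrix is controlled by the L2 operator norm. -/
lemma aux_trace_mul_le_norm {d : ℕ} {ρ : Matrix (Fin d) (Fin d) ℂ} (hρ : ρ.PosSemidef)
    (htr : ρ.trace = 1) (A : Matrix (Fin d) (Fin d) ℂ) :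
    ‖(A * ρ).trace‖ ≤ ‖A‖ := by
  set S := CFC.sqrt ρ with hSdef
  have hSh : S.IsHermitian := (Matrix.nonneg_iff_posSemidef.mp (CFC.sqrt_nonneg ρ)).1
  have hSS : S * S = ρ := CFC.sqrt_mul_sqrt_self ρ hρ.nonneg
  have hcyc : (A * ρ).trace = (S * (A * S)).trace := by
    rw [← hSS, ← Matrix.trace_mul_comm (A * S) S]
    congr 1
    noncomm_ring
  set v : Fin d → Fin d → ℂ := fun i l => S l i with hv
  have hdiag : ∀ i, (S * (A * S)) i i = star (v i) ⬝ᵥ (A *ᵥ (v i)) := by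
    intro i
    simp only [Matrix.mul_apply, Matrix.mulVec, dotProduct, Pi.star_apply, hv,
      RCLike.star_def]
    apply Finset.sum_congr rfl
    intro j _
    have hconj : (starRingEnd ℂ) (S j i) = S i j := by
      have := congrFun (congrFun hSh.eq i) j
      simpa [Matrix.conjTranspose_apply] using this
    rw [hconj]
  have hbound : ∀ i, ‖star (v i) ⬝ᵥ (A *ᵥ (v i))‖ ≤ ‖A‖ * RCLike.re (ρ i i) := by
    intro i
    have h1 : star (v i) ⬝ᵥ (A *ᵥ (v i))
        = ⟪aux_euc (v i), Matrix.toEuclideanCLM (𝕜 := ℂ) A (aux_euc (v i))⟫_ℂ :=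
      (aux_inner_euc_CLM A (v i)).symm
    have h2 : ‖⟪aux_euc (v i), Matrix.toEuclideanCLM (𝕜 := ℂ) A (aux_euc (v i))⟫_ℂ‖
        ≤ ‖aux_euc (v i)‖ * ‖Matrix.toEuclideanCLM (𝕜 := ℂ) A (aux_euc (v i))‖ :=
      norm_inner_le_norm _ _
    have h3 : ‖Matrix.toEuclideanCLM (𝕜 := ℂ) A (aux_euc (v i))‖ ≤ ‖A‖ * ‖aux_euc (v i)‖ := by
      rw [Matrix.cstar_norm_def]
      exact (Matrix.toEuclideanCLM (𝕜 := ℂ) A).le_opNorm _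
    have h4 : ‖aux_euc (v i)‖ ^ 2 = RCLike.re (ρ i i) := by
      have e1 : (‖aux_euc (v i)‖ : ℝ) ^ 2 = RCLike.re ⟪aux_euc (v i), aux_euc (v i)⟫_ℂ := by
        rw [inner_self_eq_norm_sq (𝕜 := ℂ)]
      rw [e1, aux_inner_euc_self]
      congr 1
      rw [← hSS]
      simp only [Matrix.mul_apply, dotProduct, Pi.star_apply, RCLike.star_def, hv]
      apply Finset.sum_congr rfl
      intro j _
      have hconj : (starRingEnd ℂ) (S j i) = S i j := by
        have := congrFun (congrFun hSh.eq i) j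
        simpa [Matrix.conjTranspose_apply] using this
      rw [hconj]
    calc ‖star (v i) ⬝ᵥ (A *ᵥ (v i))‖
        ≤ ‖aux_euc (v i)‖ * ‖Matrix.toEuclideanCLM (𝕜 := ℂ) A (aux_euc (v i))‖ := by
          rw [h1]; exact h2
      _ ≤ ‖aux_euc (v i)‖ * (‖A‖ * ‖aux_euc (v i)‖) :=
          mul_le_mul_of_nonneg_left h3 (norm_nonneg _)
      _ = ‖A‖ * ‖aux_euc (v i)‖ ^ 2 := by ring
      _ = ‖A‖ * RCLike.re (ρ i i) := by rw [h4]
  have htr' : ∑ i, RCLike.re (ρ i i) = 1 := by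
    have h : RCLike.re (ρ.trace) = 1 := by rw [htr]; simp
    rw [← h, Matrix.trace]
    simp [Matrix.diag]
  calc ‖(A * ρ).trace‖ = ‖∑ i, (S * (A * S)) i i‖ := by rw [hcyc, Matrix.trace]; rfl
    _ ≤ ∑ i, ‖(S * (A * S)) i i‖ := norm_sum_le _ _
    _ ≤ ∑ i, ‖A‖ * RCLike.re (ρ i i) := by
        apply Finset.sum_le_sum
        intro i _
        rw [hdiag i]
        exact hbound i
    _ = ‖A‖ * ∑ i, RCLike.re (ρ i i) := by rw [Finset.mul_sum]
    _ = ‖A‖ := by rw [htr', mul_one]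


lemma aux_mean_zero {ι : Type*} [Fintype ι] (w g : ι → ℝ) (c m : ℝ)
    (hw1 : ∑ k, w k = 1) (hm : m = ∑ k, w k * g k) :
    ∑ k, w k * (c * (g k - m)) = 0 := by
  have h1 : ∑ k, w k * (c * (g k - m)) = ∑ k, (c * (w k * g k) - (c * m) * w k) :=
    Finset.sum_congr rfl (fun k _ => by ring)
  rw [h1, Finset.sum_sub_distrib, ← Finset.mul_sum, ← Finset.mul_sum, hw1, hm]
  ring

lemma aux_shift {t : ℕ} (gj : Fin t → ℝ) (c m : ℝ) :
    ∑ j, c * (gj j - m) = c * ((∑ j, gj j) - (t:ℝ) * m) := by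
  rw [← Finset.mul_sum, Finset.sum_sub_distrib, Finset.sum_const, Finset.card_univ,
    Fintype.card_fin, nsmul_eq_mul]

/-- **Derandomization via sampling for matrix-valued function ensembles.**
There is a universal constant `C > 0` such that: for every finite nonempty input type `X`
with `|X| = d_X ≥ 2`, every finite distribution `w` over an ensemble `F` of maps from `X`
to density matrices on `ℂ^d`, and every `ε ∈ (0, 1/2)`, there are
`t ≤ ⌈C·(log d_X + d²·log(1/ε))/ε²⌉` samples `i₁, …, i_t` such that the uniform average of
`F_{i_j}` approximates the `w`-average to within `ε` simultaneously against every input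
`x ∈ X` and every BPOVM `Π`. -/
theorem derandomization_via_sampling :
    ∃ C : ℝ, 0 < C ∧
      ∀ (X : Type) [Fintype X], Nonempty X → 2 ≤ Fintype.card X →
      ∀ d : ℕ, 2 ≤ d →
      ∀ (ι : Type) [Fintype ι], Nonempty ι →
      ∀ w : ι → ℝ, (∀ k, 0 ≤ w k) → ∑ k, w k = 1 →
      ∀ F : ι → X → Matrix (Fin d) (Fin d) ℂ,
        (∀ k x, (F k x).PosSemidef ∧ (F k x).trace = 1) →
      ∀ ε : ℝ, 0 < ε → ε < 1 / 2 →
        ∃ t : ℕ, 1 ≤ t ∧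
          t ≤ ⌈C * (Real.log (Fintype.card X) + (d : ℝ) ^ 2 * Real.log (1 / ε)) / ε ^ 2⌉₊ ∧
          ∃ i : Fin t → ι, ∀ x : X, ∀ Pm : Matrix (Fin d) (Fin d) ℂ,
            Pm.PosSemidef → ((1 : Matrix (Fin d) (Fin d) ℂ) - Pm).PosSemidef →
            |((Pm * ((∑ k, w k • F k x) - (t : ℝ)⁻¹ • ∑ j : Fin t, F (i j) x)).trace).re| ≤
              ε := by
  classical
  refine ⟨6400, by norm_num, ?_⟩
  intro X _ hXne hX2 d hd ι _ hιne w hw hw1 F hF ε hε hεhalf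
  haveI : NeZero d := ⟨by omega⟩
  have hε1 : ε ≤ 1 := by linarith
  set L := Real.log (Fintype.card X) with hL
  set M := Real.log (1/ε) with hM
  have hlog2 : (0:ℝ) < Real.log 2 := Real.log_pos (by norm_num)
  have hL2 : Real.log 2 ≤ L := by
    rw [hL]
    apply Real.log_le_log (by norm_num)
    exact_mod_cast hX2
  have hM2 : Real.log 2 ≤ M := by
    rw [hM]
    apply Real.log_le_log (by norm_num)
    rw [le_div_iff₀ hε]; linarith
  have hL0 : 0 < L := lt_of_lt_of_le hlog2 hL2
  have hM0 : 0 < M := lt_of_lt_of_le hlog2 hM2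
  have hdR : (2:ℝ) ≤ (d:ℝ) := by exact_mod_cast hd
  have hd2 : (4:ℝ) ≤ (d:ℝ)^2 := by nlinarith
  have hsumpos : 0 < L + (d:ℝ)^2 * M := by nlinarith
  set tR : ℝ := 6400 * (L + (d:ℝ) ^ 2 * M) / ε ^ 2 with htR
  have htRpos : 0 < tR := by
    rw [htR]
    apply div_pos (by nlinarith) (by positivity)
  refine ⟨⌈tR⌉₊, Nat.ceil_pos.mpr htRpos, le_refl _, ?_⟩
  set t := ⌈tR⌉₊ with ht
  have htlb : tR ≤ (t:ℝ) := Nat.le_ceil _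
  have ht0 : 0 < t := Nat.ceil_pos.mpr htRpos
  have htpos : (0:ℝ) < (t:ℝ) := by exact_mod_cast ht0
  -- instances for the net
  haveI hfd : FiniteDimensional ℝ (Matrix (Fin d) (Fin d) ℂ) :=
    Module.Finite.trans ℂ (Matrix (Fin d) (Fin d) ℂ)
  have hrank : Module.finrank ℝ (Matrix (Fin d) (Fin d) ℂ) = d * d * 2 := by
    rw [Module.finrank_matrix, Complex.finrank_real_complex]
    simp [Fintype.card_fin]
  -- the net
  have hδ : (0:ℝ) < ε/4 := by positivity
  obtain ⟨T, hTcard, hT1, hTnet⟩ := aux_exists_net (Matrix (Fin d) (Fin d) ℂ) hδ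
  -- basic quantities
  set g : X → Matrix (Fin d) (Fin d) ℂ → ι → ℝ :=
    fun x A k => ((A * F k x).trace).re with hg
  set mu : X → Matrix (Fin d) (Fin d) ℂ → ℝ :=
    fun x A => ∑ k, w k * g x A k with hmu
  have hgb : ∀ x A k, |g x A k| ≤ ‖A‖ := by
    intro x A k
    calc |g x A k| ≤ ‖(A * F k x).trace‖ := by
          exact Complex.abs_re_le_norm _
      _ ≤ ‖A‖ := aux_trace_mul_le_norm (hF k x).1 (hF k x).2 A
  have hmub : ∀ x A, ‖A‖ ≤ 1 → |mu x A| ≤ 1 := by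
    intro x A hA
    rw [hmu]
    calc |∑ k, w k * g x A k| ≤ ∑ k, |w k * g x A k| := Finset.abs_sum_le_sum_abs _ _
      _ ≤ ∑ k, w k * 1 := by
          apply Finset.sum_le_sum
          intro k _
          rw [abs_mul, abs_of_nonneg (hw k)]
          exact mul_le_mul_of_nonneg_left (le_trans (hgb x A k) hA) (hw k)
      _ = 1 := by simp [hw1]
  -- events
  set sg : Bool → ℝ := fun b => if b then 1 else -1 with hsg
  set he : X × Matrix (Fin d) (Fin d) ℂ × Bool → ι → ℝ :=
    fun e k => sg e.2.2 * (g e.1 e.2.1 k - mu e.1 e.2.1) with hhe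
  set Ev : Finset (X × Matrix (Fin d) (Fin d) ℂ × Bool) :=
    Finset.univ ×ˢ (T ×ˢ Finset.univ) with hEv
  set Bad : X × Matrix (Fin d) (Fin d) ℂ × Bool → Finset (Fin t → ι) :=
    fun e => Finset.univ.filter (fun f => (t:ℝ) * (ε/2) ≤ ∑ j, he e (f j)) with hBad
  have hsgabs : ∀ b, |sg b| = 1 := by intro b; cases b <;> simp [hsg]
  have hch : ∀ e ∈ Ev, ∑ f ∈ Bad e, (∏ j, w (f j)) ≤ Real.exp (-(t:ℝ) * ε^2 / 64) := by
    intro e heEv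
    rw [hEv, Finset.mem_product] at heEv
    have hAT : e.2.1 ∈ T := (Finset.mem_product.mp heEv.2).1
    have hAn : ‖e.2.1‖ ≤ 1 := hT1 _ hAT
    apply aux_chernoff_tail w hw hw1 (he e) ?_ ?_ t hε hε1
    · rw [hhe]
      exact aux_mean_zero w (g e.1 e.2.1) (sg e.2.2) (mu e.1 e.2.1) hw1 (by simp only [hmu])
    · intro k
      rw [hhe]
      have h1 : |g e.1 e.2.1 k| ≤ 1 := le_trans (hgb _ _ _) hAn
      have h2 : |mu e.1 e.2.1| ≤ 1 := hmub _ _ hAn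
      rw [abs_mul, hsgabs, one_mul]
      calc |g e.1 e.2.1 k - mu e.1 e.2.1| ≤ |g e.1 e.2.1 k| + |mu e.1 e.2.1| := abs_sub _ _
        _ ≤ 2 := by linarith
  -- total probability comparison
  have hone : (1:ℝ) = ∑ f : Fin t → ι, ∏ j, w (f j) := by
    have h1 := Finset.prod_univ_sum (fun _ : Fin t => (Finset.univ : Finset ι))
      (fun _ k => w k)
    rw [Fintype.piFinset_univ] at h1
    rw [← h1]
    rw [Finset.prod_congr rfl (fun j _ => hw1), Finset.prod_const, one_pow]
  -- smallness of total bad probability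
  have hsmall : (Ev.card : ℝ) * Real.exp (-(t:ℝ) * ε^2 / 64) < 1 := by
    have hcardEv : (Ev.card : ℝ) = (Fintype.card X : ℝ) * ((T.card : ℝ) * 2) := by
      rw [hEv, Finset.card_product, Finset.card_product]
      push_cast
      simp [Finset.card_univ]
    -- bound T.card by an exponential
    have h9ε : (0:ℝ) < 9/ε := by positivity
    have hTexp : (T.card : ℝ) ≤ Real.exp ((d*d*2 : ℕ) * (Real.log 9 + M)) := by
      calc (T.card : ℝ) ≤ (1 + 2/(ε/4)) ^ (Module.finrank ℝ (Matrix (Fin d) (Fin d) ℂ)) :=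
            hTcard
        _ = (1 + 8/ε) ^ (d*d*2 : ℕ) := by
            rw [hrank]
            congr 2
            rw [div_div_eq_mul_div]
            ring
        _ ≤ (9/ε) ^ (d*d*2 : ℕ) := by
            apply pow_le_pow_left₀ (by positivity)
            rw [← sub_nonneg]
            have hdiff : 9/ε - (1 + 8/ε) = (1 - ε)/ε := by
              field_simp
              ring
            rw [hdiff]
            exact div_nonneg (by linarith) (le_of_lt hε)
        _ = Real.exp (Real.log (9/ε)) ^ (d*d*2 : ℕ) := by
            rw [Real.exp_log h9ε]
        _ = Real.exp ((d*d*2 : ℕ) * Real.log (9/ε)) := by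
            rw [← Real.exp_nat_mul]
        _ = Real.exp ((d*d*2 : ℕ) * (Real.log 9 + M)) := by
            congr 1
            rw [hM, Real.log_div (by norm_num) (ne_of_gt hε), Real.log_div (by norm_num)
              (ne_of_gt hε), Real.log_one]
            ring
    have hXexp : (Fintype.card X : ℝ) = Real.exp L := by
      rw [hL, Real.exp_log]
      exact_mod_cast Nat.lt_of_lt_of_le Nat.zero_lt_two hX2
    have hlog9 : Real.log 9 ≤ 4 * M := by
      calc Real.log 9 ≤ Real.log 16 := Real.log_le_log (by norm_num) (by norm_num)
        _ = 4 * Real.log 2 := by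
            rw [show (16:ℝ) = 2^(4:ℕ) by norm_num, Real.log_pow]
            push_cast; ring
        _ ≤ 4 * M := by linarith
    have hdd : ((d*d*2 : ℕ) : ℝ) = 2 * (d:ℝ)^2 := by push_cast; ring
    -- the exponent bound
    have hexp1 : ((d*d*2 : ℕ) : ℝ) * (Real.log 9 + M) ≤ 10 * ((d:ℝ)^2 * M) := by
      rw [hdd]
      have hbd : Real.log 9 + M ≤ 5 * M := by linarith
      have hd2' : (0:ℝ) ≤ (d:ℝ)^2 := by positivity
      nlinarith [mul_le_mul_of_nonneg_left hbd hd2']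
    have hexp2 : (t:ℝ) * ε^2 / 64 ≥ 100 * (L + (d:ℝ)^2 * M) := by
      have h1 : tR * ε^2 = 6400 * (L + (d:ℝ)^2 * M) := by
        rw [htR]
        exact div_mul_cancel₀ _ (pow_ne_zero 2 (ne_of_gt hε))
      have h2 : tR * ε^2 ≤ (t:ℝ) * ε^2 :=
        mul_le_mul_of_nonneg_right htlb (sq_nonneg ε)
      linarith
    -- comparison
    have hcomp : (Ev.card : ℝ) ≤ Real.exp (2*L + 1 + 10 * ((d:ℝ)^2 * M)) := by
      rw [hcardEv, hXexp]
      have h2e : (2:ℝ) ≤ Real.exp 1 := by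
        have := Real.add_one_le_exp 1
        linarith
      calc Real.exp L * ((T.card:ℝ) * 2)
          ≤ Real.exp L * (Real.exp ((d*d*2 : ℕ) * (Real.log 9 + M)) * Real.exp 1) := by
            apply mul_le_mul_of_nonneg_left _ (Real.exp_nonneg _)
            apply mul_le_mul hTexp h2e (by norm_num) (Real.exp_nonneg _)
        _ ≤ Real.exp L * (Real.exp (10 * ((d:ℝ)^2 * M)) * Real.exp 1) := by
            apply mul_le_mul_of_nonneg_left _ (Real.exp_nonneg _)
            apply mul_le_mul_of_nonneg_right _ (Real.exp_nonneg _)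
            exact Real.exp_le_exp.mpr hexp1
        _ = Real.exp (L + (10 * ((d:ℝ)^2 * M) + 1)) := by
            rw [← Real.exp_add, ← Real.exp_add]
        _ ≤ Real.exp (2*L + 1 + 10 * ((d:ℝ)^2 * M)) := by
            apply Real.exp_le_exp.mpr
            linarith
    have hstrict : 2*L + 1 + 10 * ((d:ℝ)^2 * M) < (t:ℝ) * ε^2 / 64 := by
      have h1 : (1:ℝ) < 2 * L := by
        have : Real.log 2 > 0.6 := by
          have h2 := Real.log_two_gt_d9
          linarith
        linarith
      have hd2M : 0 < (d:ℝ)^2 * M := by nlinarith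
      nlinarith [hexp2]
    calc (Ev.card : ℝ) * Real.exp (-(t:ℝ) * ε^2 / 64)
        ≤ Real.exp (2*L + 1 + 10 * ((d:ℝ)^2 * M)) * Real.exp (-(t:ℝ) * ε^2 / 64) :=
          mul_le_mul_of_nonneg_right hcomp (Real.exp_nonneg _)
      _ = Real.exp ((2*L + 1 + 10 * ((d:ℝ)^2 * M)) + (-(t:ℝ) * ε^2 / 64)) := by
          rw [← Real.exp_add]
      _ < Real.exp 0 := by
          apply Real.exp_lt_exp.mpr
          have : -(t:ℝ) * ε^2 / 64 = -((t:ℝ) * ε^2 / 64) := by ring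
          rw [this]
          linarith
      _ = 1 := Real.exp_zero
  -- existence of a good sample
  have hgood : ∃ f : Fin t → ι, ∀ e ∈ Ev, ¬ ((t:ℝ) * (ε/2) ≤ ∑ j, he e (f j)) := by
    by_contra hcon
    push_neg at hcon
    have hWnn : ∀ f : Fin t → ι, (0:ℝ) ≤ ∏ j, w (f j) :=
      fun f => Finset.prod_nonneg (fun j _ => hw (f j))
    have h2 : ∑ f : Fin t → ι, ∏ j, w (f j)
        ≤ ∑ e ∈ Ev, ∑ f ∈ Bad e, ∏ j, w (f j) := by
      calc ∑ f : Fin t → ι, ∏ j, w (f j)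
          ≤ ∑ f : Fin t → ι, ∑ e ∈ Ev, (if f ∈ Bad e then (∏ j, w (f j)) else 0) := by
            apply Finset.sum_le_sum
            intro f _
            obtain ⟨e, heEv, hbadf⟩ := hcon f
            have hfB : f ∈ Bad e := by
              rw [hBad, Finset.mem_filter]
              exact ⟨Finset.mem_univ _, hbadf⟩
            calc (∏ j, w (f j)) = (if f ∈ Bad e then (∏ j, w (f j)) else 0) := by
                  rw [if_pos hfB]
              _ ≤ ∑ e' ∈ Ev, (if f ∈ Bad e' then (∏ j, w (f j)) else 0) := by
                  apply Finset.single_le_sum (f := fun e' =>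
                    (if f ∈ Bad e' then (∏ j, w (f j)) else 0)) _ heEv
                  intro e' _
                  by_cases hc : f ∈ Bad e' <;> simp [hc, hWnn f]
        _ = ∑ e ∈ Ev, ∑ f : Fin t → ι, (if f ∈ Bad e then (∏ j, w (f j)) else 0) :=
            Finset.sum_comm
        _ = ∑ e ∈ Ev, ∑ f ∈ Bad e, ∏ j, w (f j) := by
            apply Finset.sum_congr rfl
            intro e _
            rw [Finset.sum_ite_mem, Finset.univ_inter]
    have h3 : ∑ e ∈ Ev, ∑ f ∈ Bad e, (∏ j, w (f j))
        ≤ (Ev.card : ℝ) * Real.exp (-(t:ℝ) * ε^2 / 64) := by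
      calc ∑ e ∈ Ev, ∑ f ∈ Bad e, (∏ j, w (f j))
          ≤ ∑ _e ∈ Ev, Real.exp (-(t:ℝ) * ε^2 / 64) := Finset.sum_le_sum hch
        _ = (Ev.card : ℝ) * Real.exp (-(t:ℝ) * ε^2 / 64) := by
            rw [Finset.sum_const, nsmul_eq_mul]
    rw [← hone] at h2
    linarith
  obtain ⟨f, hf⟩ := hgood
  -- goodness in usable form
  have hgf : ∀ x : X, ∀ A ∈ T, |(∑ j, g x A (f j)) - (t:ℝ) * mu x A| ≤ (t:ℝ) * (ε/2) := by
    intro x A hAT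
    have hmem : ∀ b : Bool, (x, A, b) ∈ Ev := by
      intro b
      rw [hEv, Finset.mem_product]
      exact ⟨Finset.mem_univ _, Finset.mem_product.mpr ⟨hAT, Finset.mem_univ _⟩⟩
    have hsum : ∀ b : Bool, ∑ j, he (x, A, b) (f j)
        = sg b * ((∑ j, g x A (f j)) - (t:ℝ) * mu x A) := by
      intro b
      rw [hhe]
      exact aux_shift (fun j => g x A (f j)) (sg b) (mu x A)
    have hsg1 : sg true = 1 := by simp [hsg]
    have hsg2 : sg false = -1 := by simp [hsg]
    have hp := hf (x, A, true) (hmem true)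
    have hm := hf (x, A, false) (hmem false)
    rw [hsum true, hsg1, one_mul] at hp
    rw [hsum false, hsg2, neg_one_mul] at hm
    push_neg at hp hm
    rw [abs_le]
    constructor <;> linarith
  refine ⟨f, ?_⟩
  intro x Pm hPm hIPm
  -- find net point
  have hPmn : ‖Pm‖ ≤ 1 := aux_bpovm_norm_le_one hPm hIPm
  obtain ⟨A, hAT, hPA⟩ := hTnet Pm hPmn
  -- expansion of the trace pairing
  have expand : ∀ B : Matrix (Fin d) (Fin d) ℂ,
      ((B * ((∑ k, w k • F k x) - (t : ℝ)⁻¹ • ∑ j : Fin t, F (f j) x)).trace).re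
      = mu x B - (t:ℝ)⁻¹ * ∑ j, g x B (f j) := by
    intro B
    rw [mul_sub, Matrix.trace_sub, Complex.sub_re]
    congr 1
    · rw [Finset.mul_sum, Matrix.trace_sum, Complex.re_sum, hmu]
      apply Finset.sum_congr rfl
      intro k _
      rw [mul_smul_comm, Matrix.trace_smul, Complex.smul_re, hg]
      rfl
    · rw [mul_smul_comm, Matrix.trace_smul, Complex.smul_re, Finset.mul_sum,
        Matrix.trace_sum, Complex.re_sum]
      rfl
  -- split into net point and remainder
  have hsplit : ((Pm * ((∑ k, w k • F k x) - (t : ℝ)⁻¹ • ∑ j : Fin t, F (f j) x)).trace).re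
      = ((A * ((∑ k, w k • F k x) - (t : ℝ)⁻¹ • ∑ j : Fin t, F (f j) x)).trace).re
      + (((Pm - A) * ((∑ k, w k • F k x) - (t : ℝ)⁻¹ • ∑ j : Fin t, F (f j) x)).trace).re := by
    rw [← Complex.add_re, ← Matrix.trace_add, ← add_mul]
    norm_num
  -- bound the net-point term
  have hnet : |((A * ((∑ k, w k • F k x) - (t : ℝ)⁻¹ • ∑ j : Fin t, F (f j) x)).trace).re|
      ≤ ε/2 := by
    rw [expand A]
    have h1 := hgf x A hAT
    have h2 : mu x A - (t:ℝ)⁻¹ * ∑ j, g x A (f j)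
        = -((t:ℝ)⁻¹ * ((∑ j, g x A (f j)) - (t:ℝ) * mu x A)) := by
      field_simp
      ring
    rw [h2, abs_neg, abs_mul, abs_of_nonneg (by positivity : (0:ℝ) ≤ (t:ℝ)⁻¹)]
    calc (t:ℝ)⁻¹ * |(∑ j, g x A (f j)) - (t:ℝ) * mu x A| ≤ (t:ℝ)⁻¹ * ((t:ℝ) * (ε/2)) := by
          apply mul_le_mul_of_nonneg_left h1 (by positivity)
      _ = ε/2 := by field_simp
  -- bound the remainder term
  have hrem : |(((Pm - A) * ((∑ k, w k • F k x) - (t : ℝ)⁻¹ • ∑ j : Fin t, F (f j) x)).trace).re|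
      ≤ ε/2 := by
    rw [expand (Pm - A)]
    have hgPA : ∀ k, |g x (Pm - A) k| ≤ ε/4 := fun k => le_trans (hgb x (Pm - A) k) hPA
    have hb1 : |mu x (Pm - A)| ≤ ε/4 := by
      rw [hmu]
      calc |∑ k, w k * g x (Pm - A) k| ≤ ∑ k, |w k * g x (Pm - A) k| :=
            Finset.abs_sum_le_sum_abs _ _
        _ ≤ ∑ k, w k * (ε/4) := by
            apply Finset.sum_le_sum
            intro k _
            rw [abs_mul, abs_of_nonneg (hw k)]
            exact mul_le_mul_of_nonneg_left (hgPA k) (hw k)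
        _ = ε/4 := by rw [← Finset.sum_mul, hw1, one_mul]
    have hb2 : |(t:ℝ)⁻¹ * ∑ j, g x (Pm - A) (f j)| ≤ ε/4 := by
      rw [abs_mul, abs_of_nonneg (by positivity : (0:ℝ) ≤ (t:ℝ)⁻¹)]
      calc (t:ℝ)⁻¹ * |∑ j, g x (Pm - A) (f j)|
          ≤ (t:ℝ)⁻¹ * ∑ j, |g x (Pm - A) (f j)| := by
            apply mul_le_mul_of_nonneg_left (Finset.abs_sum_le_sum_abs _ _) (by positivity)
        _ ≤ (t:ℝ)⁻¹ * ∑ _j : Fin t, (ε/4) := by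
            apply mul_le_mul_of_nonneg_left _ (by positivity)
            exact Finset.sum_le_sum (fun j _ => hgPA (f j))
        _ = ε/4 := by
            rw [Finset.sum_const, Finset.card_univ, Fintype.card_fin, nsmul_eq_mul]
            field_simp
    calc |mu x (Pm - A) - (t:ℝ)⁻¹ * ∑ j, g x (Pm - A) (f j)|
        ≤ |mu x (Pm - A)| + |(t:ℝ)⁻¹ * ∑ j, g x (Pm - A) (f j)| := abs_sub _ _
      _ ≤ ε/2 := by linarith
  rw [hsplit]
  calc |((A * ((∑ k, w k • F k x) - (t : ℝ)⁻¹ • ∑ j : Fin t, F (f j) x)).trace).re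
      + (((Pm - A) * ((∑ k, w k • F k x) - (t : ℝ)⁻¹ • ∑ j : Fin t, F (f j) x)).trace).re|
      ≤ |((A * ((∑ k, w k • F k x) - (t : ℝ)⁻¹ • ∑ j : Fin t, F (f j) x)).trace).re|
      + |(((Pm - A) * ((∑ k, w k • F k x) - (t : ℝ)⁻¹ • ∑ j : Fin t, F (f j) x)).trace).re| :=
        abs_add_le _ _
    _ ≤ ε := by linarith
end
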